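/- arXiv:0808.0275 — 11 statements merged into one kernel-verified Lean document; each statement's English description precedes it below -/
import Mathlib

section
/- Let A ⊆ B be an extension of integral domains and let R := A ⋉ B be the trivial ring extension of A by B. Then R is a Prüfer ring if and only if A is a Prüfer domain and every nonzero element of A maps to a unit of B (i.e., the quotient field K of A is contained in B). -/
/-- The content ideal `c(f)` of a polynomial: the ideal generated by its coefficients. -/
def contentIdeal {R : Type*} [CommRing R] (f : Polynomial R) : Ideal R :=
  Ideal.span (Set.range f.coeff)

/-- A polynomial `f` is Gaussian if `c(f*g) = c(f)*c(g)` for every polynomial `g`. -/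
def IsGaussianPoly {R : Type*} [CommRing R] (f : Polynomial R) : Prop :=
  ∀ g : Polynomial R, contentIdeal (f * g) = contentIdeal f * contentIdeal g

/-- A commutative ring is Gaussian if every polynomial over it is Gaussian. -/
def IsGaussianRing (R : Type*) [CommRing R] : Prop :=
  ∀ f : Polynomial R, IsGaussianPoly f

/-- A commutative ring is arithmetical if every finitely generated ideal is locally
principal: its extension to the localization at each maximal ideal is principal. -/
def IsArithmeticalRing (R : Type*) [CommRing R] : Prop :=
  ∀ I : Ideal R, I.FG → ∀ P : Ideal R, ∀ hP : P.IsMaximal,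
    haveI := hP.isPrime
    (I.map (algebraMap R (Localization P.primeCompl))).IsPrincipal

/-- A commutative ring is a Prüfer ring if every finitely generated ideal containing a
non-zero-divisor is invertible as a fractional ideal. -/
def IsPruferRing (R : Type*) [CommRing R] : Prop :=
  ∀ I : Ideal R, I.FG → (∃ r ∈ I, r ∈ nonZeroDivisors R) →
    IsUnit (I : FractionalIdeal (nonZeroDivisors R) (FractionRing R))

/-- An integral domain is a Prüfer domain if every nonzero finitely generated ideal is
invertible as a fractional ideal. -/
def IsPruferDomain (A : Type*) [CommRing A] [IsDomain A] : Prop :=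
  ∀ I : Ideal A, I.FG → I ≠ ⊥ →
    IsUnit (I : FractionalIdeal (nonZeroDivisors A) (FractionRing A))

/-- A commutative ring is a total ring of quotients if each of its elements is
either a unit or a zero-divisor. -/
def IsTotalRingOfQuotients (R : Type*) [CommRing R] : Prop :=
  ∀ r : R, IsUnit r ∨ r ∉ nonZeroDivisors R

/-- A commutative ring is pseudo-arithmetical if every Gaussian polynomial over it has
locally principal content ideal. -/
def IsPseudoArithmetical (R : Type*) [CommRing R] : Prop :=
  ∀ f : Polynomial R, IsGaussianPoly f → ∀ P : Ideal R, ∀ hP : P.IsMaximal,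
    haveI := hP.isPrime
    ((contentIdeal f).map (algebraMap R (Localization P.primeCompl))).IsPrincipal

/-- The ideal `0 ⋉ E` of the trivial ring extension `A ⋉ E`: the ideal of elements
with zero first component, i.e. the kernel of the projection `A ⋉ E → A`. -/
def zeroIdealTrivSqZeroExt (A E : Type*) [CommRing A] [AddCommGroup E] [Module A E]
    [Module Aᵐᵒᵖ E] [IsCentralScalar A E] : Ideal (TrivSqZeroExt A E) :=
  RingHom.ker (TrivSqZeroExt.fstHom A A E).toRingHom

set_option maxHeartbeats 1000000

section PruferTSZE
open TrivSqZeroExt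

section Aux
variable {A B : Type*} [CommRing A] [IsDomain A] [CommRing B] [IsDomain B]
  [Algebra A B] [Module Aᵐᵒᵖ B] [IsCentralScalar A B]

local notation "R" => TrivSqZeroExt A B

lemma tsze_mem_nzd_iff (hinj : Function.Injective (algebraMap A B)) (x : R) :
    x ∈ nonZeroDivisors R ↔ x.fst ≠ 0 := by
  have hB : ∀ (a : A) (b : B), a • b = algebraMap A B a * b := fun a b => Algebra.smul_def a b
  constructor
  · intro hx h0
    have h1 : (inr (1:B) : R) * x = 0 := by
      apply TrivSqZeroExt.ext
      · simp
      · simp [h0, op_smul_eq_smul]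
    have := (mem_nonZeroDivisors_iff_right.mp hx) _ h1
    have h2 := congrArg TrivSqZeroExt.snd this
    simpa using h2
  · intro hfst
    rw [mem_nonZeroDivisors_iff_right]
    intro y hy
    have h1 : y.fst * x.fst = 0 := congrArg TrivSqZeroExt.fst hy
    have hy1 : y.fst = 0 := by
      rcases mul_eq_zero.mp h1 with h | h
      · exact h
      · exact absurd h hfst
    have h2 : y.fst • x.snd + MulOpposite.op x.fst • y.snd = 0 := congrArg TrivSqZeroExt.snd hy
    rw [hy1, zero_smul, zero_add, op_smul_eq_smul, hB] at h2
    have hax : algebraMap A B x.fst ≠ 0 := fun h => hfst (hinj (h.trans (map_zero _).symm))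
    have : y.snd = 0 := by
      rcases mul_eq_zero.mp h2 with h | h
      · exact absurd h hax
      · exact h
    exact TrivSqZeroExt.ext hy1 this

section Fwd
variable (hinj : Function.Injective (algebraMap A B))
include hinj

lemma units_of_prufer (h : IsPruferRing (TrivSqZeroExt A B)) :
    ∀ a : A, a ≠ 0 → IsUnit (algebraMap A B a) := by
  intro a ha
  set Q := FractionRing R with hQ
  set α := algebraMap R Q with hα
  have αinj : Function.Injective α := IsFractionRing.injective R Q
  set I : Ideal R := Ideal.span {inl a, inr (1:B)} with hI
  have hfg : I.FG := by rw [hI]; exact Submodule.fg_span (Set.toFinite _)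
  have hmem : (inl a : R) ∈ I := Ideal.subset_span (by simp)
  have hnzd : (inl a : R) ∈ nonZeroDivisors R :=
    (tsze_mem_nzd_iff hinj _).2 (by simpa using ha)
  obtain ⟨u, hu⟩ := h I hfg ⟨inl a, hmem, hnzd⟩
  have hIJ : (I : FractionalIdeal (nonZeroDivisors R) Q) * ↑u⁻¹ = 1 := by
    rw [← hu]; exact u.mul_inv
  -- key: every z in the submodule product satisfies C z
  have h1 : (1 : Q) ∈ ((I : FractionalIdeal (nonZeroDivisors R) Q) : Submodule R Q) *
      ((↑u⁻¹ : FractionalIdeal (nonZeroDivisors R) Q) : Submodule R Q) := by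
    rw [← FractionalIdeal.coe_mul, hIJ, FractionalIdeal.coe_one]
    exact Submodule.mem_one.mpr ⟨1, (algebraMap R Q).map_one⟩
  have key : ∀ z ∈ ((I : FractionalIdeal (nonZeroDivisors R) Q) : Submodule R Q) *
      ((↑u⁻¹ : FractionalIdeal (nonZeroDivisors R) Q) : Submodule R Q),
      ∃ w : R, α w = z ∧ algebraMap A B w.fst ∈ Ideal.span {algebraMap A B a} := by
    intro z hz
    refine Submodule.mul_induction_on hz (fun m hm n hn => ?_)
      (fun x y hx hy => by
        obtain ⟨w1, hw1, hc1⟩ := hx; obtain ⟨w2, hw2, hc2⟩ := hy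
        exact ⟨w1 + w2, by rw [map_add, hw1, hw2], by
          rw [TrivSqZeroExt.fst_add, map_add]; exact Ideal.add_mem _ hc1 hc2⟩)
    -- n has the property: multiplying by elements of I lands in range α
    have hna : ∀ x ∈ I, ∃ w : R, α x * n = α w := by
      intro x hx
      have : α x * n ∈ ((1 : FractionalIdeal (nonZeroDivisors R) Q) : Submodule R Q) := by
        rw [← hIJ, FractionalIdeal.coe_mul]
        exact Submodule.mul_mem_mul
          (FractionalIdeal.mem_coe.mpr (FractionalIdeal.mem_coeIdeal_of_mem _ hx)) hn
      rw [FractionalIdeal.coe_one] at this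
      obtain ⟨w, hw⟩ := Submodule.mem_one.mp this
      exact ⟨w, hw.symm⟩
    obtain ⟨s, hs⟩ := hna (inl a) hmem
    obtain ⟨r, hr⟩ := hna (inr 1) (Ideal.subset_span (by simp))
    -- fst r = 0
    have hr0 : r.fst = 0 := by
      have : α (r * inr 1) = 0 := by
        rw [map_mul, ← hr, mul_assoc, mul_comm n (α (inr (1:B))), ← mul_assoc, ← map_mul,
          inr_mul_inr, map_zero, zero_mul]
      have hz0 : r * inr (1:B) = 0 := αinj (by rw [this, map_zero])
      have := congrArg TrivSqZeroExt.snd hz0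
      simp only [snd_mul, fst_inr, snd_inr, op_smul_eq_smul, smul_zero, add_zero, zero_smul,
        TrivSqZeroExt.snd_zero, Algebra.smul_def, mul_one] at this
      exact hinj (by simpa using this)
    -- algebraMap (fst s) ∈ (algebraMap a)
    have hsmem : algebraMap A B s.fst ∈ Ideal.span {algebraMap A B a} := by
      have h3 : α (s * inr 1) = α (inl a * r) := by
        rw [map_mul, ← hs, map_mul, ← hr, mul_assoc, mul_comm n _, ← mul_assoc]
      have h4 : s * inr (1:B) = inl a * r := αinj h3
      have := congrArg TrivSqZeroExt.snd h4
      simp only [snd_mul, fst_inr, snd_inr, snd_inl, fst_inl, op_smul_eq_smul, smul_zero,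
        add_zero, zero_smul, zero_add] at this
      rw [Algebra.smul_def, mul_one, Algebra.smul_def] at this
      exact Ideal.mem_span_singleton'.mpr ⟨r.snd, by rw [mul_comm, ← this]⟩
    -- m = α x with x ∈ I
    rw [FractionalIdeal.coe_coeIdeal] at hm
    obtain ⟨x, hx, hαx⟩ := IsLocalization.mem_coeSubmodule _ _ |>.mp hm
    obtain ⟨c, d, hcd⟩ := Ideal.mem_span_pair.mp hx
    refine ⟨c * s + d * r, ?_, ?_⟩
    · rw [map_add, map_mul, map_mul, ← hs, ← hr, ← hαx, ← hcd]
      push_cast [map_add, map_mul]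
      ring
    · have : (c * s + d * r).fst = c.fst * s.fst := by
        simp [hr0]
      rw [this, map_mul]
      exact Ideal.mul_mem_left _ _ hsmem
  obtain ⟨w, hw, hmemw⟩ := key 1 h1
  have : w = 1 := αinj (by rw [hw, map_one])
  rw [this] at hmemw
  simp only [TrivSqZeroExt.fst_one, map_one] at hmemw
  exact isUnit_of_dvd_one (Ideal.mem_span_singleton.mp hmemw)

lemma fst_mem_nzd (x : TrivSqZeroExt A B) (hx : x ∈ nonZeroDivisors (TrivSqZeroExt A B)) :
    x.fst ∈ nonZeroDivisors A :=
  mem_nonZeroDivisors_of_ne_zero ((tsze_mem_nzd_iff hinj x).mp hx)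

lemma prufer_domain_of_prufer (h : IsPruferRing (TrivSqZeroExt A B)) : IsPruferDomain A := by
  intro I₀ hfg hne
  set K := FractionRing A with hK
  set αA := algebraMap A K with hαA
  set Q := FractionRing R with hQ
  set α := algebraMap R Q with hα
  set φ : Q →+* K := IsLocalization.map (M := nonZeroDivisors R) (T := nonZeroDivisors A) K
    (TrivSqZeroExt.fstHom A A B).toRingHom (fun x hx => fst_mem_nzd hinj x hx) with hφ
  have hφα : ∀ x : R, φ (α x) = αA x.fst := fun x => IsLocalization.map_eq _ x
  set I : Ideal R := I₀.map (algebraMap A R) with hI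
  have hfgR : I.FG := Ideal.FG.map hfg _
  obtain ⟨a, haI, ha⟩ := Submodule.ne_bot_iff _ |>.mp hne
  have hmemI : (inl a : R) ∈ I := by
    rw [hI, ← TrivSqZeroExt.algebraMap_eq_inl]; exact Ideal.mem_map_of_mem _ haI
  have hnzd : (inl a : R) ∈ nonZeroDivisors R :=
    (tsze_mem_nzd_iff hinj _).2 (by simpa using ha)
  obtain ⟨u, hu⟩ := h I hfgR ⟨inl a, hmemI, hnzd⟩
  have hIJ : (I : FractionalIdeal (nonZeroDivisors R) Q) * ↑u⁻¹ = 1 := by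
    rw [← hu]; exact u.mul_inv
  -- fst of elements of I lie in I₀
  have hfstI : ∀ x : R, x ∈ I → x.fst ∈ I₀ := by
    intro x hx
    have h1 : x.fst ∈ I.map (TrivSqZeroExt.fstHom A A B).toRingHom :=
      Ideal.mem_map_of_mem _ hx
    rw [hI, Ideal.map_map] at h1
    have h2 : ((TrivSqZeroExt.fstHom A A B).toRingHom.comp
        (algebraMap A (TrivSqZeroExt A B))) = RingHom.id A := by
      ext r; simp [TrivSqZeroExt.algebraMap_eq_inl]
    rwa [h2, Ideal.map_id] at h1
  -- the candidate inverse of I₀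
  have hfracJ : IsFractional (nonZeroDivisors A)
      ((1 : Submodule A K) / ((I₀ : FractionalIdeal (nonZeroDivisors A) K) : Submodule A K)) := by
    refine ⟨a, mem_nonZeroDivisors_of_ne_zero ha, fun b hb => ?_⟩
    have hmem : αA a ∈ ((I₀ : FractionalIdeal (nonZeroDivisors A) K) : Submodule A K) := by
      rw [FractionalIdeal.coe_coeIdeal]
      exact IsLocalization.mem_coeSubmodule _ _ |>.mpr ⟨a, haI, rfl⟩
    have := Submodule.mem_div_iff_forall_mul_mem.mp hb _ hmem
    obtain ⟨y, hy⟩ := Submodule.mem_one.mp this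
    exact ⟨y, by rw [hy, Algebra.smul_def, mul_comm]⟩
  set J₀ : FractionalIdeal (nonZeroDivisors A) K := ⟨_, hfracJ⟩ with hJ₀
  have hJ₀mem : ∀ k : K, k ∈ J₀ ↔
      ∀ y ∈ ((I₀ : FractionalIdeal (nonZeroDivisors A) K) : Submodule A K), k * y ∈
        (1 : Submodule A K) := by
    intro k; exact Submodule.mem_div_iff_forall_mul_mem
  refine IsUnit.of_mul_eq_one J₀ (le_antisymm ?_ ?_)
  · refine FractionalIdeal.mul_le.mpr fun i hi j hj => ?_
    obtain ⟨x, hxI, hx⟩ := FractionalIdeal.mem_coeIdeal _ |>.mp hi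
    have := (hJ₀mem j).mp hj (αA x) (by
      rw [FractionalIdeal.coe_coeIdeal]
      exact IsLocalization.mem_coeSubmodule _ _ |>.mpr ⟨x, hxI, rfl⟩)
    obtain ⟨y, hy⟩ := Submodule.mem_one.mp this
    exact FractionalIdeal.mem_one_iff _ |>.mpr ⟨y, by rw [hy, hx, mul_comm]⟩
  · rw [FractionalIdeal.one_le]
    -- transfer 1 ∈ I * u⁻¹ through φ
    have h1 : (1 : Q) ∈ ((I : FractionalIdeal (nonZeroDivisors R) Q) : Submodule R Q) *
        ((↑u⁻¹ : FractionalIdeal (nonZeroDivisors R) Q) : Submodule R Q) := by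
      rw [← FractionalIdeal.coe_mul, hIJ, FractionalIdeal.coe_one]
      exact Submodule.mem_one.mpr ⟨1, (algebraMap R Q).map_one⟩
    have key : ∀ z ∈ ((I : FractionalIdeal (nonZeroDivisors R) Q) : Submodule R Q) *
        ((↑u⁻¹ : FractionalIdeal (nonZeroDivisors R) Q) : Submodule R Q),
        φ z ∈ ((I₀ : FractionalIdeal (nonZeroDivisors A) K) : Submodule A K) *
          (J₀ : Submodule A K) := by
      intro z hz
      refine Submodule.mul_induction_on hz (fun m hm n hn => ?_) (fun x y hx hy => by
        rw [φ.map_add]; exact Submodule.add_mem _ hx hy)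
      rw [φ.map_mul]
      rw [FractionalIdeal.coe_coeIdeal] at hm
      obtain ⟨x, hxI, hx⟩ := IsLocalization.mem_coeSubmodule _ _ |>.mp hm
      have hφm : φ m = αA x.fst := by rw [← hx, hφα]
      refine Submodule.mul_mem_mul (by
        rw [hφm, FractionalIdeal.coe_coeIdeal]
        exact IsLocalization.mem_coeSubmodule _ _ |>.mpr ⟨x.fst, hfstI x hxI, rfl⟩) ?_
      -- φ n ∈ J₀
      refine (hJ₀mem (φ n)).mpr fun y hy => ?_
      rw [FractionalIdeal.coe_coeIdeal] at hy
      obtain ⟨c, hcI, hc⟩ := IsLocalization.mem_coeSubmodule _ _ |>.mp hy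
      have hinlc : (inl c : R) ∈ I := by
        rw [hI, ← TrivSqZeroExt.algebraMap_eq_inl]; exact Ideal.mem_map_of_mem _ hcI
      have hprod : n * α (inl c) ∈ (1 : Submodule R Q) := by
        rw [mul_comm]
        have h2 : α (inl c) * n ∈ ((I : FractionalIdeal (nonZeroDivisors R) Q) : Submodule R Q) *
            ((↑u⁻¹ : FractionalIdeal (nonZeroDivisors R) Q) : Submodule R Q) := by
          refine Submodule.mul_mem_mul ?_ hn
          rw [FractionalIdeal.coe_coeIdeal]
          exact IsLocalization.mem_coeSubmodule _ _ |>.mpr ⟨inl c, hinlc, rfl⟩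
        rwa [← FractionalIdeal.coe_mul, hIJ, FractionalIdeal.coe_one] at h2
      obtain ⟨w, hw⟩ := Submodule.mem_one.mp hprod
      have hstep : φ (α (inl c)) = αA c := by rw [hφα]; simp
      have : φ n * y = αA w.fst := by
        rw [← hc, ← hstep, ← φ.map_mul, ← hw, hφα]
      rw [this]
      exact Submodule.mem_one.mpr ⟨w.fst, rfl⟩
    have := key 1 h1
    rw [map_one] at this
    rw [← FractionalIdeal.mem_coe, FractionalIdeal.coe_mul]
    exact this

lemma prufer_of_conditions (hA : IsPruferDomain A)
    (hU : ∀ a : A, a ≠ 0 → IsUnit (algebraMap A B a)) :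
    IsPruferRing (TrivSqZeroExt A B) := by
  intro I hfg hex
  obtain ⟨r, hrI, hrnzd⟩ := hex
  set K := FractionRing A with hK
  set αA := algebraMap A K with hαA
  set Q := FractionRing R with hQ
  set α := algebraMap R Q with hα
  have hsub : nonZeroDivisors A ≤ (nonZeroDivisors R).comap (algebraMap A R) := by
    intro q hq
    have : (algebraMap A R q : R) = inl q := by rw [TrivSqZeroExt.algebraMap_eq_inl]
    simp only [Submonoid.mem_comap, this]
    exact (tsze_mem_nzd_iff hinj _).2 (by simpa using nonZeroDivisors.ne_zero hq)
  set ψ : K →+* Q := IsLocalization.map (M := nonZeroDivisors A) (T := nonZeroDivisors R) Q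
    (algebraMap A R) hsub with hψ
  have hψα : ∀ c : A, ψ (αA c) = α (inl c) := by
    intro c
    have := IsLocalization.map_eq (S := K) (Q := Q) hsub c
    rwa [TrivSqZeroExt.algebraMap_eq_inl] at this
  have ha : r.fst ≠ 0 := (tsze_mem_nzd_iff hinj r).mp hrnzd
  -- `0 ⋉ B ⊆ I`
  have hBsub : ∀ b : B, (inr b : R) ∈ I := by
    intro b
    obtain ⟨v, hv⟩ := hU r.fst ha
    have hmul : r * inr ((v⁻¹ : Bˣ) * b) = inr b := by
      refine TrivSqZeroExt.ext (by simp) ?_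
      simp only [snd_mul, fst_inr, snd_inr, op_smul_eq_smul, Algebra.smul_def, map_zero,
        zero_mul, add_zero]
      rw [← hv, ← mul_assoc, Units.mul_inv, one_mul]
    rw [← hmul]
    exact Ideal.mul_mem_right _ _ hrI
  set I₀ : Ideal A := I.map (TrivSqZeroExt.fstHom A A B).toRingHom with hI₀
  have hfstsurj : Function.Surjective (TrivSqZeroExt.fstHom A A B).toRingHom :=
    fun c => ⟨inl c, rfl⟩
  have hinlI : ∀ c ∈ I₀, (inl c : R) ∈ I := by
    intro c hc
    obtain ⟨x, hxI, hxc⟩ := Ideal.mem_map_iff_of_surjective _ hfstsurj |>.mp hc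
    have hx2 : (inl c : R) = x - inr x.snd := by
      refine TrivSqZeroExt.ext ?_ ?_
      · rw [fst_inl, TrivSqZeroExt.fst_sub, fst_inr, sub_zero, ← hxc]; rfl
      · rw [snd_inl, TrivSqZeroExt.snd_sub, snd_inr, sub_self]
    rw [hx2]
    exact Ideal.sub_mem _ hxI (hBsub _)
  have hfg₀ : I₀.FG := Ideal.FG.map hfg _
  have hne₀ : I₀ ≠ ⊥ := by
    rw [Submodule.ne_bot_iff]
    exact ⟨r.fst, Ideal.mem_map_of_mem _ hrI, ha⟩
  obtain ⟨u₀, hu₀⟩ := hA I₀ hfg₀ hne₀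
  have hIJ₀ : (I₀ : FractionalIdeal (nonZeroDivisors A) K) * ↑u₀⁻¹ = 1 := by
    rw [← hu₀]; exact u₀.mul_inv
  -- candidate inverse of I
  have hfracJ : IsFractional (nonZeroDivisors R)
      ((1 : Submodule R Q) / ((I : FractionalIdeal (nonZeroDivisors R) Q) : Submodule R Q)) := by
    refine ⟨r, hrnzd, fun b hb => ?_⟩
    have hmem : α r ∈ ((I : FractionalIdeal (nonZeroDivisors R) Q) : Submodule R Q) := by
      rw [FractionalIdeal.coe_coeIdeal]
      exact IsLocalization.mem_coeSubmodule _ _ |>.mpr ⟨r, hrI, rfl⟩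
    have := Submodule.mem_div_iff_forall_mul_mem.mp hb _ hmem
    obtain ⟨y, hy⟩ := Submodule.mem_one.mp this
    exact ⟨y, by rw [hy, Algebra.smul_def, mul_comm]⟩
  set J : FractionalIdeal (nonZeroDivisors R) Q := ⟨_, hfracJ⟩ with hJ
  have hJmem : ∀ z : Q, z ∈ J ↔
      ∀ y ∈ ((I : FractionalIdeal (nonZeroDivisors R) Q) : Submodule R Q),
        z * y ∈ (1 : Submodule R Q) := by
    intro z; exact Submodule.mem_div_iff_forall_mul_mem
  refine IsUnit.of_mul_eq_one J (le_antisymm ?_ ?_)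
  · refine FractionalIdeal.mul_le.mpr fun i hi j hj => ?_
    obtain ⟨x, hxI, hx⟩ := FractionalIdeal.mem_coeIdeal _ |>.mp hi
    have := (hJmem j).mp hj (α x) (by
      rw [FractionalIdeal.coe_coeIdeal]
      exact IsLocalization.mem_coeSubmodule _ _ |>.mpr ⟨x, hxI, rfl⟩)
    obtain ⟨y, hy⟩ := Submodule.mem_one.mp this
    exact FractionalIdeal.mem_one_iff _ |>.mpr ⟨y, by rw [hy, hx, mul_comm]⟩
  · rw [FractionalIdeal.one_le]
    have h1 : (1 : K) ∈ ((I₀ : FractionalIdeal (nonZeroDivisors A) K) : Submodule A K) *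
        ((↑u₀⁻¹ : FractionalIdeal (nonZeroDivisors A) K) : Submodule A K) := by
      rw [← FractionalIdeal.coe_mul, hIJ₀, FractionalIdeal.coe_one]
      exact Submodule.mem_one.mpr ⟨1, (algebraMap A K).map_one⟩
    have key : ∀ k ∈ ((I₀ : FractionalIdeal (nonZeroDivisors A) K) : Submodule A K) *
        ((↑u₀⁻¹ : FractionalIdeal (nonZeroDivisors A) K) : Submodule A K),
        ψ k ∈ ((I : FractionalIdeal (nonZeroDivisors R) Q) : Submodule R Q) *
          (J : Submodule R Q) := by
      intro k hk
      refine Submodule.mul_induction_on hk (fun m hm n hn => ?_) (fun x y hx hy => by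
        rw [ψ.map_add]; exact Submodule.add_mem _ hx hy)
      rw [ψ.map_mul]
      rw [FractionalIdeal.coe_coeIdeal] at hm
      obtain ⟨c, hcI, hc⟩ := IsLocalization.mem_coeSubmodule _ _ |>.mp hm
      have hψm : ψ m = α (inl c) := by rw [← hc, hψα]
      refine Submodule.mul_mem_mul (by
        rw [hψm, FractionalIdeal.coe_coeIdeal]
        exact IsLocalization.mem_coeSubmodule _ _ |>.mpr ⟨inl c, hinlI c hcI, rfl⟩) ?_
      -- ψ n ∈ J
      refine (hJmem (ψ n)).mpr fun y hy => ?_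
      rw [FractionalIdeal.coe_coeIdeal] at hy
      obtain ⟨x, hxI, hx⟩ := IsLocalization.mem_coeSubmodule _ _ |>.mp hy
      -- first component part
      have hfst : x.fst ∈ I₀ := Ideal.mem_map_of_mem _ hxI
      have hn1 : αA x.fst * n ∈ (1 : Submodule A K) := by
        have h2 : αA x.fst * n ∈
            ((I₀ : FractionalIdeal (nonZeroDivisors A) K) : Submodule A K) *
            ((↑u₀⁻¹ : FractionalIdeal (nonZeroDivisors A) K) : Submodule A K) := by
          refine Submodule.mul_mem_mul ?_ hn
          rw [FractionalIdeal.coe_coeIdeal]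
          exact IsLocalization.mem_coeSubmodule _ _ |>.mpr ⟨x.fst, hfst, rfl⟩
        rwa [← FractionalIdeal.coe_mul, hIJ₀, FractionalIdeal.coe_one] at h2
      obtain ⟨e, he⟩ := Submodule.mem_one.mp hn1
      have hpart1 : ψ n * α (inl x.fst) = α (inl e) := by
        rw [← hψα, ← ψ.map_mul, mul_comm, ← he, hψα]
      -- second component part
      obtain ⟨⟨p, q⟩, hpq⟩ := IsLocalization.surj (nonZeroDivisors A) n
      have hq0 : (q : A) ≠ 0 := nonZeroDivisors.ne_zero q.prop
      obtain ⟨vq, hvq⟩ := hU q hq0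
      set d : B := (vq⁻¹ : Bˣ) * (algebraMap A B p * x.snd) with hd
      have hqd : (inl (q : A) : R) * inr d = inl p * inr x.snd := by
        rw [inl_mul_inr, inl_mul_inr, hd, Algebra.smul_def, Algebra.smul_def, ← hvq,
          ← mul_assoc, Units.mul_inv, one_mul]
      have hqunit : IsUnit (α (inl (q : A))) := by
        have := IsLocalization.map_units Q (⟨inl (q : A), hsub q.prop⟩ : nonZeroDivisors R)
        exact this
      have hpart2 : ψ n * α (inr x.snd) = α (inr d) := by
        refine hqunit.mul_left_cancel ?_
        have hnq : ψ n * α (inl (q : A)) = α (inl p) := by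
          rw [← hψα, ← hψα, ← ψ.map_mul, hpq]
        calc α (inl (q : A)) * (ψ n * α (inr x.snd))
            = (ψ n * α (inl (q : A))) * α (inr x.snd) := by ring
          _ = α (inl p * inr x.snd) := by rw [hnq, α.map_mul]
          _ = α (inl (q : A)) * α (inr d) := by rw [← hqd, α.map_mul]
      have hxsplit : α x = α (inl x.fst) + α (inr x.snd) := by
        rw [← α.map_add]
        congr 1
        exact (inl_fst_add_inr_snd_eq x).symm
      rw [← hx, hxsplit, mul_add, hpart1, hpart2, ← α.map_add]
      exact Submodule.mem_one.mpr ⟨inl e + inr d, rfl⟩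
    have := key 1 h1
    rw [ψ.map_one] at this
    rw [← FractionalIdeal.mem_coe, FractionalIdeal.coe_mul]
    exact this

end Fwd
end Aux

end PruferTSZE

/-- For an extension of integral domains `A ⊆ B`, the trivial ring extension
`R := A ⋉ B` is a Prüfer ring iff `A` is a Prüfer domain and every nonzero element of `A`
maps to a unit of `B` (i.e. `qf(A) ⊆ B`). -/
theorem prufer_trivSqZeroExt_iff (A B : Type*) [CommRing A] [IsDomain A]
    [CommRing B] [IsDomain B] [Algebra A B] [Module Aᵐᵒᵖ B] [IsCentralScalar A B]
    (hinj : Function.Injective (algebraMap A B)) :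
    IsPruferRing (TrivSqZeroExt A B) ↔
      IsPruferDomain A ∧ ∀ a : A, a ≠ 0 → IsUnit (algebraMap A B a) := by
  constructor
  · intro h
    exact ⟨prufer_domain_of_prufer hinj h, units_of_prufer hinj h⟩
  · rintro ⟨hA, hU⟩
    exact prufer_of_conditions hinj hA hU
end

section
/- Let A ⊆ B be an extension of integral domains and let R := A ⋉ B be the trivial ring extension of A by B. Then R is an arithmetical ring if and only if A is a Prüfer domain and B is the quotient field of A (i.e., B is a fraction field of A, IsFractionRing A B). -/
section Helpers

lemma dvd_loc_iff {R : Type*} [CommRing R] (P : Ideal R) [P.IsPrime] (x y : R) :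
    (algebraMap R (Localization P.primeCompl) x ∣ algebraMap R (Localization P.primeCompl) y)
      ↔ ∃ s ∉ P, ∃ r, s * y = r * x := by
  set L := Localization P.primeCompl
  set f := algebraMap R L
  constructor
  · rintro ⟨t, ht⟩
    obtain ⟨⟨r, s⟩, hrs⟩ := IsLocalization.mk'_surjective P.primeCompl t
    have hspec := IsLocalization.mk'_spec L r s
    have key : f (s * y) = f (r * x) := by
      rw [map_mul, map_mul, ht, ← hrs]
      calc f ↑s * (f x * IsLocalization.mk' L r s)
          = f x * (IsLocalization.mk' L r s * f ↑s) := by ring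
        _ = f x * f r := by rw [hspec]
        _ = f r * f x := by ring
    obtain ⟨c, hc⟩ := (IsLocalization.eq_iff_exists P.primeCompl L).mp key
    exact ⟨c * s, fun h => (c * s).2 h, c * r, by linear_combination hc⟩
  · rintro ⟨s, hs, r, h⟩
    have hu : IsUnit (f s) := IsLocalization.map_units _ (⟨s, hs⟩ : P.primeCompl)
    obtain ⟨v, hv⟩ := hu.exists_left_inv
    have hm : f s * f y = f r * f x := by rw [← map_mul, ← map_mul, h]
    exact ⟨v * f r, by linear_combination v * hm - f y * hv⟩

/-- In a local ring, if the span of `{x, y}` is principal then `x ∣ y` or `y ∣ x`. -/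
lemma dvd_or_dvd_of_span_pair_principal {L : Type*} [CommRing L] [IsLocalRing L] {x y : L}
    (h : (Ideal.span {x, y}).IsPrincipal) : x ∣ y ∨ y ∣ x := by
  obtain ⟨z, hz⟩ := h
  have hx : x ∈ Submodule.span L ({z} : Set L) := hz ▸ Ideal.subset_span (by simp)
  have hy : y ∈ Submodule.span L ({z} : Set L) := hz ▸ Ideal.subset_span (by simp)
  rw [Submodule.mem_span_singleton] at hx hy
  obtain ⟨γ, hγ⟩ := hx
  obtain ⟨δ, hδ⟩ := hy
  rw [smul_eq_mul] at hγ hδ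
  have hzm : z ∈ Ideal.span {x, y} := by rw [hz]; exact Submodule.mem_span_singleton_self z
  rw [Ideal.mem_span_pair] at hzm
  obtain ⟨α, β, hαβ⟩ := hzm
  have key : (α * γ + β * δ) * z = z := by linear_combination α*hγ + β*hδ + hαβ
  by_cases hu : IsUnit (α * γ + β * δ)
  · rcases IsLocalRing.isUnit_or_isUnit_of_isUnit_add hu with h1 | h1
    · left
      obtain ⟨w, hw⟩ := (isUnit_of_mul_isUnit_right h1).exists_left_inv
      exact ⟨w * δ, by linear_combination -hδ - δ*z*hw + w*δ*hγ⟩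
    · right
      obtain ⟨w, hw⟩ := (isUnit_of_mul_isUnit_right h1).exists_left_inv
      exact ⟨w * γ, by linear_combination -hγ - γ*z*hw + w*γ*hδ⟩
  · have h1 : IsUnit (1 - (α * γ + β * δ)) :=
      IsLocalRing.isUnit_one_sub_self_of_mem_nonunits _ hu
    obtain ⟨w, hw⟩ := h1.exists_left_inv
    have hz0 : z = 0 := by linear_combination -z*hw - w*key
    have : x = 0 := by rw [hz0, mul_zero] at hγ; exact hγ.symm
    have : y = 0 := by rw [hz0, mul_zero] at hδ; exact hδ.symm
    left; simp [*]

lemma isArithmeticalRing_iff {R : Type*} [CommRing R] :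
    IsArithmeticalRing R ↔ ∀ (x y : R) (P : Ideal R), P.IsMaximal →
      (∃ s ∉ P, ∃ r, s * y = r * x) ∨ (∃ s ∉ P, ∃ r, s * x = r * y) := by
  constructor
  · intro h x y P hP
    haveI := hP.isPrime
    have hprin := h (Ideal.span {x, y}) (Submodule.fg_span (Set.toFinite _)) P hP
    rw [Ideal.map_span, Set.image_insert_eq, Set.image_singleton] at hprin
    rcases dvd_or_dvd_of_span_pair_principal hprin with hd | hd
    · exact Or.inl ((dvd_loc_iff P x y).mp hd)
    · exact Or.inr ((dvd_loc_iff P y x).mp hd)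
  · intro h I hFG P hP
    haveI := hP.isPrime
    obtain ⟨T, hT⟩ := hFG
    set f := algebraMap R (Localization P.primeCompl)
    classical
    have key : ∀ T : Finset R, ∃ r : R,
        (Ideal.span (T : Set R)).map f = Ideal.span {f r} := by
      intro T
      induction T using Finset.induction_on with
      | empty => exact ⟨0, by simp [Ideal.span_singleton_eq_bot.mpr rfl]⟩
      | insert _ _ hnot ih =>
        rename_i a T
        obtain ⟨r, hr⟩ := ih
        rw [Finset.coe_insert, Ideal.span_insert, Ideal.map_sup, hr, Ideal.map_span,
          Set.image_singleton]
        rcases h a r P hP with hd | hd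
        · exact ⟨a, sup_eq_left.mpr (Ideal.span_singleton_le_span_singleton.mpr
            ((dvd_loc_iff P a r).mpr hd))⟩
        · exact ⟨r, sup_eq_right.mpr (Ideal.span_singleton_le_span_singleton.mpr
            ((dvd_loc_iff P r a).mpr hd))⟩
    obtain ⟨r, hr⟩ := key T
    exact ⟨⟨f r, by rw [← hT, hr]⟩⟩

lemma isArithmeticalRing_of_surjective {R S : Type*} [CommRing R] [CommRing S] (f : R →+* S)
    (hf : Function.Surjective f) (h : IsArithmeticalRing R) : IsArithmeticalRing S := by
  rw [isArithmeticalRing_iff] at h ⊢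
  intro x y P hP
  obtain ⟨x', rfl⟩ := hf x
  obtain ⟨y', rfl⟩ := hf y
  haveI : (P.comap f).IsMaximal := Ideal.comap_isMaximal_of_surjective f hf
  rcases h x' y' (P.comap f) this with ⟨s, hs, r, hsr⟩ | ⟨s, hs, r, hsr⟩
  · exact Or.inl ⟨f s, hs, f r, by rw [← map_mul, ← map_mul, hsr]⟩
  · exact Or.inr ⟨f s, hs, f r, by rw [← map_mul, ← map_mul, hsr]⟩

open FractionalIdeal in
lemma comp_of_prufer {A : Type*} [CommRing A] [IsDomain A] (h : IsPruferDomain A)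
    (a b : A) (P : Ideal A) (hP : P.IsPrime) :
    (∃ s ∉ P, ∃ r, s * b = r * a) ∨ (∃ s ∉ P, ∃ r, s * a = r * b) := by
  have h1P : (1 : A) ∉ P := fun hq => hP.ne_top (Ideal.eq_top_of_isUnit_mem _ hq isUnit_one)
  by_cases ha : a = 0
  · exact Or.inr ⟨1, h1P, 0, by simp [ha]⟩
  by_cases hb : b = 0
  · exact Or.inl ⟨1, h1P, 0, by simp [hb]⟩
  set K := FractionRing A
  set f := algebraMap A K with hf
  have hfinj : Function.Injective f := IsFractionRing.injective A K
  set I : Ideal A := Ideal.span {a, b} with hI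
  have hIne : I ≠ ⊥ := by
    intro hbot
    have : a ∈ (⊥ : Ideal A) := hbot ▸ Ideal.subset_span (by simp)
    exact ha (Ideal.mem_bot.mp this)
  set J : FractionalIdeal (nonZeroDivisors A) K := (I : FractionalIdeal (nonZeroDivisors A) K)
    with hJ
  have hJ0 : J ≠ 0 := coeIdeal_ne_zero.mpr hIne
  classical
  have hu := h I ⟨({a, b} : Finset A), by simp [hI]⟩ hIne
  have hJmul : J * (1 / J) = 1 := by
    obtain ⟨J', hJ'⟩ : ∃ J', J * J' = 1 := ⟨↑hu.unit⁻¹, hu.unit.mul_inv⟩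
    refine le_antisymm mul_one_div_le_one ?_
    have hle : J' ≤ 1 / J := by
      rw [le_div_iff_mul_le hJ0, mul_comm]
      exact hJ'.le
    calc (1 : FractionalIdeal (nonZeroDivisors A) K) = J * J' := hJ'.symm
      _ ≤ J * (1 / J) := by gcongr
  have haJ : f a ∈ J := mem_coeIdeal_of_mem _ (Ideal.subset_span (by simp))
  have hbJ : f b ∈ J := mem_coeIdeal_of_mem _ (Ideal.subset_span (by simp))
  have hJdec : J = spanSingleton (nonZeroDivisors A) (f a)
      + spanSingleton (nonZeroDivisors A) (f b) := by
    rw [hJ, show I = Ideal.span {a} ⊔ Ideal.span {b} by rw [hI, Ideal.span_insert],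
      coeIdeal_sup, coeIdeal_span_singleton, coeIdeal_span_singleton]
  have h1mem : (1 : K) ∈ J * (1 / J) := by rw [hJmul]; exact one_mem_one _
  rw [hJdec, add_mul, ← mem_coe, coe_add] at h1mem
  obtain ⟨z1, hz1, z2, hz2, hsum⟩ := Submodule.mem_sup.mp h1mem
  rw [mem_coe, mem_singleton_mul] at hz1 hz2
  obtain ⟨y1, hy1, rfl⟩ := hz1
  obtain ⟨y2, hy2, rfl⟩ := hz2
  rw [← hJdec] at hy1 hy2
  rw [mem_div_iff_of_ne_zero hJ0] at hy1 hy2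
  obtain ⟨c1, hc1⟩ := (mem_one_iff _).mp (hy1 _ haJ)
  obtain ⟨d1, hd1⟩ := (mem_one_iff _).mp (hy1 _ hbJ)
  obtain ⟨c2, hc2⟩ := (mem_one_iff _).mp (hy2 _ haJ)
  obtain ⟨d2, hd2⟩ := (mem_one_iff _).mp (hy2 _ hbJ)
  have hcross1 : c1 * b = d1 * a := by
    apply hfinj
    rw [_root_.map_mul, _root_.map_mul, hc1, hd1]
    ring
  have hcross2 : c2 * b = d2 * a := by
    apply hfinj
    rw [_root_.map_mul, _root_.map_mul, hc2, hd2]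
    ring
  have hone : c1 + d2 = 1 := by
    apply hfinj
    rw [_root_.map_add, hc1, hd2, _root_.map_one]
    linear_combination hsum
  have : c1 ∉ P ∨ d2 ∉ P := by
    by_contra hcon
    push_neg at hcon
    exact h1P (hone ▸ Ideal.add_mem P hcon.1 hcon.2)
  rcases this with hc | hd
  · exact Or.inl ⟨c1, hc, d1, hcross1⟩
  · exact Or.inr ⟨d2, hd, c2, hcross2.symm⟩

open FractionalIdeal in
lemma isPruferDomain_of_isArithmeticalRing {A : Type*} [CommRing A] [IsDomain A]
    (h : IsArithmeticalRing A) : IsPruferDomain A := by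
  classical
  intro I hFG hne
  set K := FractionRing A
  set f := algebraMap A K with hfdef
  have hfinj : Function.Injective f := IsFractionRing.injective A K
  set J : FractionalIdeal (nonZeroDivisors A) K := ↑I with hJdef
  have hJ0 : J ≠ 0 := coeIdeal_ne_zero.mpr hne
  suffices hmul : J * (1 / J) = 1 by exact IsUnit.of_mul_eq_one _ hmul
  by_contra hne1
  have hle : J * (1 / J) ≤ 1 := mul_one_div_le_one
  obtain ⟨J₀, hJ₀⟩ := le_one_iff_exists_coeIdeal.mp hle
  have hJ₀ne : J₀ ≠ ⊤ := by
    rintro rfl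
    rw [coeIdeal_top] at hJ₀
    exact hne1 hJ₀.symm
  obtain ⟨P, hPmax, hJP⟩ := Ideal.exists_le_maximal J₀ hJ₀ne
  haveI := hPmax.isPrime
  have hcomp := isArithmeticalRing_iff.mp h
  obtain ⟨T, hT⟩ := hFG
  have hTne : T.Nonempty := by
    rw [Finset.nonempty_iff_ne_empty]
    rintro rfl
    simp at hT
    exact hne hT.symm
  have key : ∀ T : Finset A, T.Nonempty →
      ∃ x ∈ T, ∀ a ∈ T, ∃ s ∉ P, ∃ c, s * a = c * x := by
    intro T hTn
    induction T using Finset.induction_on with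
    | empty => exact absurd hTn (by simp)
    | insert _ _ hnot ih =>
      rename_i a T
      have h1P : (1 : A) ∉ P := fun hq => hPmax.ne_top (Ideal.eq_top_of_isUnit_mem _ hq isUnit_one)
      by_cases hTe : T.Nonempty
      · obtain ⟨x, hxT, hx⟩ := ih hTe
        rcases hcomp x a P hPmax with ⟨s, hs, c, hsc⟩ | ⟨s, hs, c, hsc⟩
        · refine ⟨x, Finset.mem_insert_of_mem hxT, ?_⟩
          intro b hb
          rcases Finset.mem_insert.mp hb with rfl | hbT
          · exact ⟨s, hs, c, hsc⟩
          · exact hx b hbT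
        · refine ⟨a, Finset.mem_insert_self a T, ?_⟩
          intro b hb
          rcases Finset.mem_insert.mp hb with rfl | hbT
          · exact ⟨1, h1P, 1, by ring⟩
          · obtain ⟨s', hs', c', hsc'⟩ := hx b hbT
            refine ⟨s * s',
              fun hm => ((Ideal.IsPrime.mem_or_mem ‹P.IsPrime› hm).elim hs hs'), c' * c, ?_⟩
            linear_combination s * hsc' + c' * hsc
      · refine ⟨a, Finset.mem_insert_self a T, ?_⟩
        intro b hb
        rcases Finset.mem_insert.mp hb with rfl | hbT
        · exact ⟨1, h1P, 1, by ring⟩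
        · exact absurd ⟨b, hbT⟩ hTe
  obtain ⟨x, hxT, hx⟩ := key T hTne
  have hxI : x ∈ I := hT ▸ Ideal.subset_span hxT
  have hxne : x ≠ 0 := by
    rintro rfl
    apply hne
    rw [← hT, Ideal.span_eq_bot]
    intro a haT
    obtain ⟨s, hs, c, hsc⟩ := hx a (by exact_mod_cast haT)
    have hs0 : s ≠ 0 := fun h0 => hs (h0 ▸ P.zero_mem)
    have : s * a = 0 := by rw [hsc]; ring
    exact (mul_eq_zero.mp this).resolve_left hs0
  have h2' : ∀ a : T, ∃ s, s ∉ P ∧ ∃ c, s * (a : A) = c * x := by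
    rintro ⟨a, ha⟩
    obtain ⟨s, hs, c, hc⟩ := hx a ha
    exact ⟨s, hs, c, hc⟩
  choose s hsP c hc using h2'
  set σ : A := ∏ a ∈ T.attach, s a with hσdef
  have hσ : σ ∉ P := by
    have : σ ∈ P.primeCompl := Submonoid.prod_mem _ (fun a _ => hsP a)
    exact this
  have hclear : ∀ a : T, ∃ t, σ * (a : A) = t * x := by
    intro a
    refine ⟨c a * ∏ b ∈ T.attach.erase a, s b, ?_⟩
    rw [hσdef, ← Finset.mul_prod_erase T.attach s (Finset.mem_attach T a)]
    linear_combination (∏ b ∈ T.attach.erase a, s b) * hc a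
  have hcov : ∀ i ∈ I, ∃ t, σ * i = t * x := by
    intro i hi
    rw [← hT] at hi
    induction hi using Submodule.span_induction with
    | mem z hz =>
      exact hclear ⟨z, by exact_mod_cast hz⟩
    | zero => exact ⟨0, by ring⟩
    | add z w _ _ hz hw =>
      obtain ⟨t1, ht1⟩ := hz
      obtain ⟨t2, ht2⟩ := hw
      exact ⟨t1 + t2, by linear_combination ht1 + ht2⟩
    | smul r z _ hz =>
      obtain ⟨t, ht⟩ := hz
      exact ⟨r * t, by rw [smul_eq_mul]; linear_combination r * ht⟩
  have hfx : f x ≠ 0 := fun h0 => hxne (hfinj (by rw [h0, _root_.map_zero]))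
  set y : K := f σ * (f x)⁻¹ with hydef
  have hyinv : y ∈ 1 / J := by
    rw [mem_div_iff_of_ne_zero hJ0]
    intro z hz
    obtain ⟨i, hi, rfl⟩ := (mem_coeIdeal _).mp hz
    obtain ⟨t, ht⟩ := hcov i hi
    have hfeq : f σ * f i = f t * f x := by
      rw [← _root_.map_mul, ← _root_.map_mul, ht]
    rw [mem_one_iff]
    refine ⟨t, ?_⟩
    rw [hydef]
    apply mul_right_cancel₀ hfx
    linear_combination hfeq.symm - (f σ * f i) * (inv_mul_cancel₀ hfx)
  have hσJ : f σ ∈ (J * (1 / J) : FractionalIdeal (nonZeroDivisors A) K) := by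
    have : f σ = f x * y := by
      rw [hydef]
      rw [mul_comm, mul_assoc, inv_mul_cancel₀ hfx, mul_one]
    rw [this]
    exact mul_mem_mul (mem_coeIdeal_of_mem _ hxI) hyinv
  rw [← hJ₀] at hσJ
  obtain ⟨t, htJ₀, hteq⟩ := (mem_coeIdeal _).mp hσJ
  have : t = σ := hfinj hteq
  exact hσ (hJP (this ▸ htJ₀))

lemma tsze_maximal_structure {A B : Type*} [CommRing A] [CommRing B] [Algebra A B]
    [Module Aᵐᵒᵖ B] [IsCentralScalar A B] (P' : Ideal (TrivSqZeroExt A B)) (hP' : P'.IsMaximal) :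
    ∃ P : Ideal A, P.IsMaximal ∧ ∀ z : TrivSqZeroExt A B, z ∈ P' ↔ z.fst ∈ P := by
  set f := (TrivSqZeroExt.fstHom A A B).toRingHom with hfdef
  have hfs : Function.Surjective f := fun a => ⟨TrivSqZeroExt.inl a, rfl⟩
  have hker : RingHom.ker f ≤ P' := by
    intro z hz
    have hz0 : z.fst = 0 := RingHom.mem_ker.mp hz
    have hzr : z = TrivSqZeroExt.inr z.snd := TrivSqZeroExt.ext hz0 rfl
    rw [hzr]
    have h2 : TrivSqZeroExt.inr z.snd * TrivSqZeroExt.inr z.snd = (0 : TrivSqZeroExt A B) :=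
      TrivSqZeroExt.inr_mul_inr A _ _
    have := hP'.isPrime.mem_or_mem (show TrivSqZeroExt.inr z.snd * TrivSqZeroExt.inr z.snd ∈ P'
      by rw [h2]; exact P'.zero_mem)
    tauto
  have hcm : Ideal.comap f (Ideal.map f P') = P' := by
    rw [Ideal.comap_map_of_surjective f hfs, sup_eq_left]
    rwa [← RingHom.ker_eq_comap_bot]
  refine ⟨P'.map f, ?_, ?_⟩
  · rcases Ideal.map_eq_top_or_isMaximal_of_surjective f hfs hP' with htop | hmax
    · exfalso
      apply hP'.ne_top
      rw [← hcm, htop, Ideal.comap_top]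
    · exact hmax
  · intro z
    constructor
    · exact fun hz => Ideal.mem_map_of_mem f hz
    · intro hz
      rw [← hcm]
      exact hz

lemma tsze_inr_mem_of_prime {A B : Type*} [CommRing A] [CommRing B] [Algebra A B]
    [Module Aᵐᵒᵖ B] [IsCentralScalar A B] {P' : Ideal (TrivSqZeroExt A B)} (hP' : P'.IsPrime)
    (w : B) : TrivSqZeroExt.inr w ∈ P' := by
  have h2 : TrivSqZeroExt.inr w * TrivSqZeroExt.inr w = (0 : TrivSqZeroExt A B) :=
    TrivSqZeroExt.inr_mul_inr A _ _
  have := hP'.mem_or_mem (show TrivSqZeroExt.inr w * TrivSqZeroExt.inr w ∈ P'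
    by rw [h2]; exact P'.zero_mem)
  tauto

end Helpers

/-- For an extension of integral domains `A ⊆ B`, the trivial ring extension
`R := A ⋉ B` is an arithmetical ring iff `A` is a Prüfer domain and `B` is the quotient
field of `A`. -/
theorem arithmetical_trivSqZeroExt_iff (A B : Type*) [CommRing A] [IsDomain A]
    [CommRing B] [IsDomain B] [Algebra A B] [Module Aᵐᵒᵖ B] [IsCentralScalar A B]
    (hinj : Function.Injective (algebraMap A B)) :
    IsArithmeticalRing (TrivSqZeroExt A B) ↔
      IsPruferDomain A ∧ IsFractionRing A B := by
  set g := algebraMap A B with hgdef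
  constructor
  · intro h
    have hfsurj : Function.Surjective (TrivSqZeroExt.fstHom A A B).toRingHom :=
      fun a => ⟨TrivSqZeroExt.inl a, rfl⟩
    have hArithA : IsArithmeticalRing A :=
      isArithmeticalRing_of_surjective (TrivSqZeroExt.fstHom A A B).toRingHom hfsurj h
    refine ⟨isPruferDomain_of_isArithmeticalRing hArithA, ?_⟩
    have hcomp := isArithmeticalRing_iff.mp h
    have hU : ∀ a : A, a ≠ 0 → IsUnit (g a) := by
      intro a ha
      set J : Ideal A := (Ideal.span {g a}).comap g with hJd
      have htop : J = ⊤ := by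
        by_contra hne
        obtain ⟨P, hPmax, hJP⟩ := Ideal.exists_le_maximal J hne
        haveI hPm' : (Ideal.comap (TrivSqZeroExt.fstHom A A B).toRingHom P).IsMaximal :=
          Ideal.comap_isMaximal_of_surjective _ hfsurj
        set P' := Ideal.comap (TrivSqZeroExt.fstHom A A B).toRingHom P with hP'def
        have hmemP' : ∀ z : TrivSqZeroExt A B, z ∈ P' ↔ z.fst ∈ P := fun z => Iff.rfl
        rcases hcomp (TrivSqZeroExt.inl a) (TrivSqZeroExt.inr 1) P' hPm' with
          ⟨s, hs, r, hsr⟩ | ⟨s, hs, r, hsr⟩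
        · have hsnd := congrArg TrivSqZeroExt.snd hsr
          simp only [TrivSqZeroExt.snd_mul, TrivSqZeroExt.snd_inr, TrivSqZeroExt.fst_inr,
            TrivSqZeroExt.snd_inl, TrivSqZeroExt.fst_inl, MulOpposite.op_zero, zero_smul,
            smul_zero, add_zero, zero_add, op_smul_eq_smul] at hsnd
          rw [Algebra.smul_def, Algebra.smul_def, mul_one] at hsnd
          have hmem : s.fst ∈ J := by
            rw [hJd]
            exact Ideal.mem_comap.mpr (Ideal.mem_span_singleton.mpr ⟨r.snd, hsnd⟩)
          exact hs ((hmemP' s).mpr (hJP hmem))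
        · have hfst := congrArg TrivSqZeroExt.fst hsr
          simp only [TrivSqZeroExt.fst_mul, TrivSqZeroExt.fst_inl, TrivSqZeroExt.fst_inr,
            mul_zero] at hfst
          have hsf : s.fst ∉ P := fun hm => hs ((hmemP' s).mpr hm)
          have hs0 : s.fst ≠ 0 := fun h0 => hsf (h0 ▸ P.zero_mem)
          rcases mul_eq_zero.mp hfst with h0 | h0
          · exact hs0 h0
          · exact ha h0
      have h1J : (1 : A) ∈ J := htop ▸ Submodule.mem_top
      obtain ⟨t, ht⟩ := Ideal.mem_span_singleton.mp (Ideal.mem_comap.mp h1J)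
      rw [map_one] at ht
      exact IsUnit.of_mul_eq_one t ht.symm
    have hsurj : ∀ z : B, ∃ x : A × (nonZeroDivisors A), z * g x.2 = g x.1 := by
      intro z
      obtain ⟨P'', hP''⟩ := Ideal.exists_maximal (TrivSqZeroExt A B)
      rcases hcomp (TrivSqZeroExt.inr 1) (TrivSqZeroExt.inr z) P'' hP'' with
        ⟨s, hs, r, hsr⟩ | ⟨s, hs, r, hsr⟩
      · have hsnd := congrArg TrivSqZeroExt.snd hsr
        simp only [TrivSqZeroExt.snd_mul, TrivSqZeroExt.snd_inr, TrivSqZeroExt.fst_inr,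
          MulOpposite.op_zero, zero_smul, smul_zero, add_zero] at hsnd
        rw [Algebra.smul_def, Algebra.smul_def, mul_one] at hsnd
        have hsf : s.fst ≠ 0 := by
          intro h0
          apply hs
          have hrw : s = TrivSqZeroExt.inr s.snd := TrivSqZeroExt.ext h0 rfl
          rw [hrw]
          exact tsze_inr_mem_of_prime hP''.isPrime s.snd
        exact ⟨(r.fst, ⟨s.fst, mem_nonZeroDivisors_of_ne_zero hsf⟩),
          by rw [mul_comm]; exact hsnd⟩
      · have hsnd := congrArg TrivSqZeroExt.snd hsr
        simp only [TrivSqZeroExt.snd_mul, TrivSqZeroExt.snd_inr, TrivSqZeroExt.fst_inr,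
          MulOpposite.op_zero, zero_smul, smul_zero, add_zero] at hsnd
        rw [Algebra.smul_def, Algebra.smul_def, mul_one] at hsnd
        have hrf : r.fst ≠ 0 := by
          intro h0
          rw [h0, map_zero, zero_mul] at hsnd
          have hs0 : s.fst = 0 := hinj (by rw [hsnd, map_zero])
          apply hs
          have hrw : s = TrivSqZeroExt.inr s.snd := TrivSqZeroExt.ext hs0 rfl
          rw [hrw]
          exact tsze_inr_mem_of_prime hP''.isPrime s.snd
        exact ⟨(s.fst, ⟨r.fst, mem_nonZeroDivisors_of_ne_zero hrf⟩),
          by rw [mul_comm]; exact hsnd.symm⟩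
    exact ⟨fun y => hU y (nonZeroDivisors.coe_ne_zero y), hsurj,
      fun {x y} hxy => ⟨1, by rw [hinj hxy]⟩⟩
  · rintro ⟨hPruf, hFrac⟩
    rw [isArithmeticalRing_iff]
    intro x y P' hP'max
    obtain ⟨P, hPmax, hmem⟩ := tsze_maximal_structure P' hP'max
    haveI := hPmax.isPrime
    have h1P' : (1 : TrivSqZeroExt A B) ∉ P' :=
      fun hq => hP'max.ne_top (Ideal.eq_top_of_isUnit_mem _ hq isUnit_one)
    have hgne : ∀ a : A, a ≠ 0 → g a ≠ 0 :=
      fun a ha h0 => ha (hinj (by rw [h0, map_zero]))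
    have toTSZE : ∀ (s c : A) (z w : TrivSqZeroExt A B), z.fst = 0 → w.fst = 0 →
        g s * z.snd = g c * w.snd →
        TrivSqZeroExt.inl s * z = TrivSqZeroExt.inl c * w := by
      intro s c z w hz hw hsnd
      apply TrivSqZeroExt.ext
      · simp [hz, hw]
      · simp only [TrivSqZeroExt.snd_mul, TrivSqZeroExt.snd_inl, TrivSqZeroExt.fst_inl,
          hz, hw, MulOpposite.op_zero, zero_smul, smul_zero, add_zero, zero_add]
        rw [Algebra.smul_def, Algebra.smul_def]
        exact hsnd
    by_cases ha : x.fst = 0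
    · by_cases hb : y.fst = 0
      · by_cases hu : x.snd = 0
        · refine Or.inr ⟨1, h1P', 0, ?_⟩
          have hx0 : x = 0 := TrivSqZeroExt.ext ha hu
          rw [hx0]
          ring
        · obtain ⟨⟨a₁, a₂⟩, hA⟩ := IsLocalization.surj (nonZeroDivisors A) x.snd
          obtain ⟨⟨b₁, b₂⟩, hB⟩ := IsLocalization.surj (nonZeroDivisors A) y.snd
          have ha₂ : g (a₂ : A) ≠ 0 := hgne _ (nonZeroDivisors.coe_ne_zero a₂)
          have hb₂ : g (b₂ : A) ≠ 0 := hgne _ (nonZeroDivisors.coe_ne_zero b₂)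
          have keyB : ∀ (u v : B) (p₁ : A) (p₂ : A) (q₁ : A) (q₂ : A), g p₂ ≠ 0 → g q₂ ≠ 0 →
              u * g p₂ = g p₁ → v * g q₂ = g q₁ → ∀ s c : A,
              s * (q₁ * p₂) = c * (p₁ * q₂) → g s * v = g c * u := by
            intro u v p₁ p₂ q₁ q₂ hp₂ hq₂ hp hq s c hsc
            have hcast := congrArg g hsc
            rw [_root_.map_mul, _root_.map_mul, _root_.map_mul, _root_.map_mul] at hcast
            have hkey : (g s * v - g c * u) * (g p₂ * g q₂) = 0 := by
              linear_combination (g s * g p₂) * hq - (g c * g q₂) * hp + hcast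
            rcases mul_eq_zero.mp hkey with h0 | h0
            · exact sub_eq_zero.mp h0
            · exact absurd h0 (mul_ne_zero hp₂ hq₂)
          rcases comp_of_prufer hPruf (a₁ * (b₂ : A)) (b₁ * (a₂ : A)) P hPmax.isPrime with
            ⟨s, hs, c, hsc⟩ | ⟨s, hs, c, hsc⟩
          · exact Or.inl ⟨TrivSqZeroExt.inl s,
              fun hm => hs (by simpa using (hmem _).mp hm), TrivSqZeroExt.inl c,
              toTSZE s c y x hb ha
                (keyB x.snd y.snd a₁ (a₂ : A) b₁ (b₂ : A) ha₂ hb₂ hA hB s c hsc)⟩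
          · exact Or.inr ⟨TrivSqZeroExt.inl s,
              fun hm => hs (by simpa using (hmem _).mp hm), TrivSqZeroExt.inl c,
              toTSZE s c x y ha hb
                (keyB y.snd x.snd b₁ (b₂ : A) a₁ (a₂ : A) hb₂ ha₂ hB hA s c hsc)⟩
      · have hbu : IsUnit (g y.fst) :=
          IsLocalization.map_units B ⟨y.fst, mem_nonZeroDivisors_of_ne_zero hb⟩
        obtain ⟨t, ht⟩ := hbu.exists_left_inv
        refine Or.inr ⟨1, h1P', TrivSqZeroExt.inr (t * x.snd), ?_⟩
        apply TrivSqZeroExt.ext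
        · simp [ha]
        · simp only [TrivSqZeroExt.snd_mul, TrivSqZeroExt.snd_inr, TrivSqZeroExt.fst_inr,
            TrivSqZeroExt.snd_one, TrivSqZeroExt.fst_one, one_smul, zero_smul, zero_add,
            MulOpposite.op_zero, smul_zero, add_zero, op_smul_eq_smul]
          rw [Algebra.smul_def]
          linear_combination (-x.snd) * ht
    · by_cases hb : y.fst = 0
      · have hau : IsUnit (g x.fst) :=
          IsLocalization.map_units B ⟨x.fst, mem_nonZeroDivisors_of_ne_zero ha⟩
        obtain ⟨t, ht⟩ := hau.exists_left_inv
        refine Or.inl ⟨1, h1P', TrivSqZeroExt.inr (t * y.snd), ?_⟩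
        apply TrivSqZeroExt.ext
        · simp [hb]
        · simp only [TrivSqZeroExt.snd_mul, TrivSqZeroExt.snd_inr, TrivSqZeroExt.fst_inr,
            TrivSqZeroExt.snd_one, TrivSqZeroExt.fst_one, one_smul, zero_smul, zero_add,
            MulOpposite.op_zero, smul_zero, add_zero, op_smul_eq_smul]
          rw [Algebra.smul_def]
          linear_combination (-y.snd) * ht
      · rcases comp_of_prufer hPruf x.fst y.fst P hPmax.isPrime with
          ⟨s, hs, c, hsc⟩ | ⟨s, hs, c, hsc⟩
        · have hau : IsUnit (g x.fst) :=
            IsLocalization.map_units B ⟨x.fst, mem_nonZeroDivisors_of_ne_zero ha⟩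
          obtain ⟨t, ht⟩ := hau.exists_left_inv
          refine Or.inl ⟨TrivSqZeroExt.inl s, fun hm => hs (by simpa using (hmem _).mp hm),
            TrivSqZeroExt.inl c + TrivSqZeroExt.inr (t * (g s * y.snd - g c * x.snd)), ?_⟩
          apply TrivSqZeroExt.ext
          · simpa using hsc
          · simp only [TrivSqZeroExt.snd_mul, TrivSqZeroExt.snd_inl, TrivSqZeroExt.fst_inl,
              TrivSqZeroExt.snd_add, TrivSqZeroExt.fst_add, TrivSqZeroExt.snd_inr,
              TrivSqZeroExt.fst_inr, add_zero, zero_add, MulOpposite.op_zero, zero_smul,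
              smul_zero, op_smul_eq_smul]
            rw [Algebra.smul_def, Algebra.smul_def, Algebra.smul_def]
            linear_combination (-(g s * y.snd - g c * x.snd)) * ht
        · have hbu : IsUnit (g y.fst) :=
            IsLocalization.map_units B ⟨y.fst, mem_nonZeroDivisors_of_ne_zero hb⟩
          obtain ⟨t, ht⟩ := hbu.exists_left_inv
          refine Or.inr ⟨TrivSqZeroExt.inl s, fun hm => hs (by simpa using (hmem _).mp hm),
            TrivSqZeroExt.inl c + TrivSqZeroExt.inr (t * (g s * x.snd - g c * y.snd)), ?_⟩
          apply TrivSqZeroExt.ext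
          · simpa using hsc
          · simp only [TrivSqZeroExt.snd_mul, TrivSqZeroExt.snd_inl, TrivSqZeroExt.fst_inl,
              TrivSqZeroExt.snd_add, TrivSqZeroExt.fst_add, TrivSqZeroExt.snd_inr,
              TrivSqZeroExt.fst_inr, add_zero, zero_add, MulOpposite.op_zero, zero_smul,
              smul_zero, op_smul_eq_smul]
            rw [Algebra.smul_def, Algebra.smul_def, Algebra.smul_def]
            linear_combination (-(g s * x.snd - g c * y.snd)) * ht
end

section
/- Let A ⊆ B be an extension of integral domains and let R := A ⋉ B be the trivial ring extension of A by B. Then the ideal 0 ⋉ B of R (the ideal of all elements of the form (0,b)) is not flat as an R-module; in particular the weak global dimension of R is at least 2. -/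
open TensorProduct in
set_option maxHeartbeats 1000000 in
set_option synthInstance.maxHeartbeats 400000 in
lemma zeroIdealTrivSqZeroExt.aux_tmul_ne_zero (A B : Type*) [CommRing A]
    [CommRing B] [Nontrivial B] [Algebra A B] [Module Aᵐᵒᵖ B] [IsCentralScalar A B]
    (hx : (TrivSqZeroExt.inr (1 : B) : TrivSqZeroExt A B) ∈ zeroIdealTrivSqZeroExt A B) :
    ((⟨TrivSqZeroExt.inr (1 : B), hx⟩ : ↥(zeroIdealTrivSqZeroExt A B))
      ⊗ₜ[TrivSqZeroExt A B] (⟨TrivSqZeroExt.inr (1 : B), hx⟩ : ↥(zeroIdealTrivSqZeroExt A B))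
        : TensorProduct (TrivSqZeroExt A B) ↥(zeroIdealTrivSqZeroExt A B)
            ↥(zeroIdealTrivSqZeroExt A B)) ≠ 0 := by
  set R := TrivSqZeroExt A B
  set I := zeroIdealTrivSqZeroExt A B
  letI : Module R B := Module.compHom B (TrivSqZeroExt.fstHom A A B).toRingHom
  have hsmul : ∀ (r : R) (b : B), r • b = r.fst • b := fun r b => rfl
  let β : ↥I →ₗ[R] ↥I →ₗ[R] B :=
    { toFun := fun a =>
        { toFun := fun b => (a : R).snd * (b : R).snd
          map_add' := by intro b c; simp [mul_add]
          map_smul' := by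
            rintro r ⟨b, hb⟩
            have hb0 : b.fst = 0 := hb
            show (a : R).snd * (r * b).snd = r • ((a : R).snd * b.snd)
            rw [TrivSqZeroExt.snd_mul, hb0, hsmul]
            simp [mul_smul_comm] }
      map_add' := by intro a b; ext c; simp [add_mul]
      map_smul' := by
        rintro r ⟨a, ha⟩
        have ha0 : a.fst = 0 := ha
        ext ⟨b, hb⟩
        show (r * a).snd * b.snd = r • (a.snd * b.snd)
        rw [TrivSqZeroExt.snd_mul, ha0, hsmul]
        simp [smul_mul_assoc] }
  intro h
  have := congrArg (TensorProduct.lift β) h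
  rw [map_zero, TensorProduct.lift.tmul] at this
  simp only [β, LinearMap.coe_mk, AddHom.coe_mk, TrivSqZeroExt.snd_inr, one_mul] at this
  exact one_ne_zero this

set_option maxHeartbeats 1000000 in
set_option synthInstance.maxHeartbeats 400000 in
/-- For an extension of integral domains `A ⊆ B`, the ideal `0 ⋉ B` of the
trivial ring extension `R := A ⋉ B` is not flat as an `R`-module. -/
theorem zeroIdeal_not_flat_trivSqZeroExt (A B : Type*) [CommRing A] [IsDomain A]
    [CommRing B] [IsDomain B] [Algebra A B] [Module Aᵐᵒᵖ B] [IsCentralScalar A B]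
    (hinj : Function.Injective (algebraMap A B)) :
    ¬ Module.Flat (TrivSqZeroExt A B) (zeroIdealTrivSqZeroExt A B) := by
  intro hflat
  set R := TrivSqZeroExt A B
  set I := zeroIdealTrivSqZeroExt A B with hIdef
  have hx : (TrivSqZeroExt.inr (1 : B) : R) ∈ I := by
    show TrivSqZeroExt.fstHom A A B _ = 0
    simp
  set x : ↥I := ⟨TrivSqZeroExt.inr (1 : B), hx⟩ with hxdef
  have hinj2 := Module.Flat.iff_rTensor_injective'.mp hflat I
  have h1 : (I.subtype x) • x = (0 : ↥I) := Subtype.ext (by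
    show ((x : R)) * ((x : R)) = 0
    rw [hxdef]
    exact TrivSqZeroExt.inr_mul_inr A (1 : B) 1)
  have h0 : LinearMap.rTensor (↥I) I.subtype (x ⊗ₜ[R] x) = 0 := by
    rw [LinearMap.rTensor_tmul]
    apply (TensorProduct.lid R ↥I).injective
    rw [map_zero, TensorProduct.lid_tmul, h1]
  have hxx0 : (x ⊗ₜ[R] x : TensorProduct R ↥I ↥I) = 0 := hinj2 (by rw [h0, map_zero])
  exact zeroIdealTrivSqZeroExt.aux_tmul_ne_zero A B hx hxx0
end

section
/- Let A be a commutative ring, E a nonzero A-module, and R := A ⋉ E the trivial ring extension of A by E. If R is an arithmetical ring, then A is an arithmetical ring. -/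
/-- If the trivial ring extension `R := A ⋉ E` of a commutative ring `A` by a
nonzero `A`-module `E` is an arithmetical ring, then `A` is an arithmetical ring. -/
theorem arithmetical_of_arithmetical_trivSqZeroExt (A E : Type*) [CommRing A]
    [AddCommGroup E] [Module A E] [Module Aᵐᵒᵖ E] [IsCentralScalar A E] [Nontrivial E]
    (h : IsArithmeticalRing (TrivSqZeroExt A E)) : IsArithmeticalRing A := by
  intro I hI P hP
  haveI := hP.isPrime
  set π : TrivSqZeroExt A E →+* A := (TrivSqZeroExt.fstHom A A E).toRingHom with hπdef
  have hπ : Function.Surjective π := fun a => ⟨TrivSqZeroExt.inl a, rfl⟩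
  haveI hQmax : (P.comap π).IsMaximal := Ideal.comap_isMaximal_of_surjective π hπ
  haveI := hQmax.isPrime
  obtain ⟨x, hx⟩ := h (I.map (TrivSqZeroExt.inlHom A E)) (Ideal.FG.map hI _) (P.comap π) hQmax
  set g := Localization.localRingHom (P.comap π) P π rfl
  have key : I.map (algebraMap A (Localization P.primeCompl)) =
      (((I.map (TrivSqZeroExt.inlHom A E)).map
        (algebraMap (TrivSqZeroExt A E) (Localization (P.comap π).primeCompl))).map g) := by
    rw [Ideal.map_map, Ideal.map_map]
    congr 1
    ext a
    simp [g, Localization.localRingHom_to_map, π, TrivSqZeroExt.fst_inl]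
    exact (Localization.localRingHom_to_map (P.comap π) P π rfl (TrivSqZeroExt.inl a)).symm
  refine ⟨g x, ?_⟩
  rw [key, hx]
  show Ideal.map g (Ideal.span {x}) = Ideal.span {g x}
  rw [Ideal.map_span, Set.image_singleton]
end

section
/- Let K be a field, E a nonzero K-vector space, and R := K ⋉ E the trivial ring extension of K by E. Then the ideal 0 ⋉ E of R (the ideal of all elements of the form (0,e)) is not flat as an R-module; in particular the weak global dimension of R is greater than 1. -/
set_option maxHeartbeats 2000000 in
set_option synthInstance.maxHeartbeats 1000000 in
/-- For a field `K` and a nonzero `K`-vector space `E`, the ideal `0 ⋉ E` of the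
trivial ring extension `R := K ⋉ E` is not flat as an `R`-module. -/
theorem zeroIdeal_not_flat_trivSqZeroExt_field (K E : Type*) [Field K]
    [AddCommGroup E] [Module K E] [Module Kᵐᵒᵖ E] [IsCentralScalar K E] [Nontrivial E] :
    ¬ Module.Flat (TrivSqZeroExt K E) (zeroIdealTrivSqZeroExt K E) := by
  intro hflat
  set R := TrivSqZeroExt K E with hR
  set I := zeroIdealTrivSqZeroExt K E with hI
  -- pick a nonzero vector and a dual functional sending it to 1
  obtain ⟨e, he⟩ := exists_ne (0 : E)
  have : ¬ ∀ φ : Module.Dual K E, φ e = 0 := by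
    rw [Module.forall_dual_apply_eq_zero_iff]; exact he
  obtain ⟨f, hf⟩ := not_forall.mp this
  -- the element x = (0, e) ∈ I
  have hxmem : (TrivSqZeroExt.inr e : R) ∈ I := by
    simp [hI, zeroIdealTrivSqZeroExt, RingHom.mem_ker]
  set x : I := ⟨TrivSqZeroExt.inr e, hxmem⟩ with hxdef
  -- K as an R-module via the projection
  letI : Algebra R K := (TrivSqZeroExt.fstHom K K E).toRingHom.toAlgebra
  have hsmul : ∀ (r : R) (k : K), r • k = r.fst * k := fun r k => rfl
  -- every element of I has zero fst
  have hfst : ∀ y : I, (y : R).fst = 0 := fun y => y.2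
  -- the R-bilinear form B(x,y) = f(x.snd) * f(y.snd)
  have key : ∀ (r : R) (y : I), ((r • y : I) : R).snd = r.fst • ((y : R).snd) := by
    intro r y
    have : ((r • y : I) : R) = r * (y : R) := rfl
    rw [this, TrivSqZeroExt.snd_mul, hfst y]
    simp
  let B : I →ₗ[R] I →ₗ[R] K := LinearMap.mk₂ R
    (fun a b => f (a : R).snd * f (b : R).snd)
    (by intro a a' b; simp [TrivSqZeroExt.snd_add, add_mul])
    (by intro r a b; rw [key, map_smul, hsmul]; simp [mul_assoc, smul_eq_mul])
    (by intro a b b'; simp [TrivSqZeroExt.snd_add, mul_add])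
    (by intro r a b; rw [key, map_smul, hsmul]; simp [smul_eq_mul]; ring)
  let L := TensorProduct.lift B
  -- x ⊗ x is nonzero
  have hxx : (x ⊗ₜ[R] x : TensorProduct R I I) ≠ 0 := by
    intro h0
    have : L (x ⊗ₜ[R] x) = 0 := by rw [h0]; exact map_zero L
    rw [TensorProduct.lift.tmul] at this
    simp only [B, LinearMap.mk₂_apply, hxdef] at this
    rw [TrivSqZeroExt.snd_inr] at this
    exact hf (mul_self_eq_zero.mp this)
  -- but its image under rTensor the subtype inclusion is zero
  have hinj : Function.Injective (LinearMap.rTensor (M := I) I.subtype) :=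
    hflat.rTensor_preserves_injective_linearMap I.subtype (Submodule.injective_subtype I)
  have hsx : ((x : R) • x : I) = 0 := by
    apply Subtype.ext
    show (x : R) * (x : R) = 0
    simp [hxdef, TrivSqZeroExt.inr_mul_inr]
  have himg : LinearMap.rTensor (M := I) I.subtype (x ⊗ₜ[R] x) = 0 := by
    rw [LinearMap.rTensor_tmul, Submodule.subtype_apply]
    rw [show ((x : R) : R) = (x : R) • (1 : R) from ((smul_eq_mul _ _).trans (mul_one _)).symm,
      TensorProduct.smul_tmul, hsx, TensorProduct.tmul_zero]
  exact hxx (hinj (by rw [himg, map_zero]))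
end

section
/- Let K ⊊ L be a proper extension of fields (L is a K-algebra and some element of L is not in the image of K). Then the trivial ring extension R := K ⋉ L is a Gaussian ring which is not arithmetical. -/
set_option linter.unusedSectionVars false

open Polynomial hiding contentIdeal
open TrivSqZeroExt

section

section
variable {R : Type*} [CommRing R]

theorem coeff_mem_contentIdeal (f : R[X]) (n : ℕ) : f.coeff n ∈ contentIdeal f :=
  Ideal.subset_span ⟨n, rfl⟩

theorem contentIdeal_le_iff {f : R[X]} {I : Ideal R} :
    contentIdeal f ≤ I ↔ ∀ n, f.coeff n ∈ I := by
  rw [contentIdeal, Ideal.span_le, Set.range_subset_iff]; rfl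

theorem contentIdeal_mul_le (f g : R[X]) :
    contentIdeal (f * g) ≤ contentIdeal f * contentIdeal g := by
  rw [contentIdeal_le_iff]
  intro n
  rw [coeff_mul]
  exact Ideal.sum_mem _ fun p _ =>
    Ideal.mul_mem_mul (coeff_mem_contentIdeal f p.1) (coeff_mem_contentIdeal g p.2)

theorem contentIdeal_C_mul_of_isUnit {u : R} (hu : IsUnit u) (f : R[X]) :
    contentIdeal (C u * f) = contentIdeal f := by
  apply le_antisymm
  · rw [contentIdeal_le_iff]
    intro n
    rw [coeff_C_mul]
    exact Ideal.mul_mem_left _ _ (coeff_mem_contentIdeal f n)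
  · rw [contentIdeal_le_iff]
    intro n
    obtain ⟨v, hv⟩ := hu
    have : f.coeff n = ↑v⁻¹ * (C u * f).coeff n := by
      rw [coeff_C_mul, ← mul_assoc, ← hv, Units.inv_mul, one_mul]
    rw [this]
    exact Ideal.mul_mem_left _ _ (coeff_mem_contentIdeal (C u * f) n)

theorem coeff_mem_contentIdeal_monic_mul {F : R[X]} (hF : F.Monic) (g : R[X]) (j : ℕ) :
    g.coeff j ∈ contentIdeal (F * g) := by
  suffices H : ∀ n j, g.natDegree < j + n → g.coeff j ∈ contentIdeal (F * g) by
    exact H (g.natDegree + 1) j (by omega)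
  intro n
  induction n with
  | zero =>
    intro j hj
    rw [coeff_eq_zero_of_natDegree_lt (by omega)]
    exact zero_mem _
  | succ n ih =>
    intro j hj
    rcases lt_or_ge g.natDegree (j + n) with h | h
    · exact ih j h
    have hd : g.natDegree = j + n := by omega
    have hmem : (F.natDegree, j) ∈ Finset.HasAntidiagonal.antidiagonal (F.natDegree + j) := by
      simp
    have key : (F * g).coeff (F.natDegree + j) =
        g.coeff j + ∑ p ∈ (Finset.HasAntidiagonal.antidiagonal (F.natDegree + j)).erase (F.natDegree, j),
          F.coeff p.1 * g.coeff p.2 := by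
      rw [coeff_mul, ← Finset.add_sum_erase _ _ hmem, hF.coeff_natDegree, one_mul]
    have hsum : ∑ p ∈ (Finset.HasAntidiagonal.antidiagonal (F.natDegree + j)).erase (F.natDegree, j),
        F.coeff p.1 * g.coeff p.2 ∈ contentIdeal (F * g) := by
      apply Ideal.sum_mem
      intro p hp
      rw [Finset.mem_erase, Finset.HasAntidiagonal.mem_antidiagonal] at hp
      obtain ⟨hne, hpsum⟩ := hp
      rcases lt_trichotomy p.2 j with h2 | h2 | h2
      · have : F.natDegree < p.1 := by omega
        rw [coeff_eq_zero_of_natDegree_lt this, zero_mul]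
        exact zero_mem _
      · exact absurd (Prod.ext (by omega) h2) hne
      · exact Ideal.mul_mem_left _ _ (ih p.2 (by omega))
    have : g.coeff j = (F * g).coeff (F.natDegree + j) - _ := eq_sub_of_add_eq key.symm
    rw [this]
    exact Ideal.sub_mem _ (coeff_mem_contentIdeal (F * g) (F.natDegree + j)) hsum

end


section main
variable {K L : Type*} [Field K] [Field L] [Algebra K L] [Module Kᵐᵒᵖ L] [IsCentralScalar K L]

theorem tsze_mul_eq_zero {x y : TrivSqZeroExt K L} (hx : x.fst = 0) (hy : y.fst = 0) :
    x * y = 0 := by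
  ext
  · rw [fst_mul, hx, zero_mul, fst_zero]
  · rw [snd_mul, hx, hy, snd_zero]
    simp

theorem tsze_isUnit_iff {x : TrivSqZeroExt K L} : IsUnit x ↔ x.fst ≠ 0 := by
  rw [isUnit_iff_isUnit_fst, isUnit_iff_ne_zero]

theorem tsze_poly_mul_eq_zero {f g : Polynomial (TrivSqZeroExt K L)}
    (hf : ∀ n, (f.coeff n).fst = 0) (hg : ∀ n, (g.coeff n).fst = 0) : f * g = 0 := by
  refine Polynomial.ext fun n => ?_
  rw [coeff_mul, coeff_zero]
  exact Finset.sum_eq_zero fun (p : ℕ × ℕ) _ => tsze_mul_eq_zero (hf p.1) (hg p.2)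

theorem tsze_contentIdeal_eq_top {f : Polynomial (TrivSqZeroExt K L)}
    (hf : ∃ n, (f.coeff n).fst ≠ 0) : contentIdeal f = ⊤ := by
  obtain ⟨n, hn⟩ := hf
  exact Ideal.eq_top_of_isUnit_mem _ (Ideal.subset_span ⟨n, rfl⟩) (tsze_isUnit_iff.2 hn)
end main

section main2
variable {K L : Type*} [Field K] [Field L] [Algebra K L] [Module Kᵐᵒᵖ L] [IsCentralScalar K L]

theorem coeff_mem_contentIdeal' {R : Type*} [CommRing R] (f : Polynomial R) (n : ℕ) :
    f.coeff n ∈ contentIdeal f := Ideal.subset_span ⟨n, rfl⟩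

theorem tsze_gauss_case {f g : Polynomial (TrivSqZeroExt K L)}
    (hf : ∃ n, (f.coeff n).fst ≠ 0) (hg : ∀ n, (g.coeff n).fst = 0) :
    contentIdeal (f * g) = contentIdeal f * contentIdeal g := by
  have hcf : contentIdeal f = ⊤ := tsze_contentIdeal_eq_top hf
  set f₀ : Polynomial K := f.map (fstHom K K L).toRingHom with hf₀
  have hcoe : ∀ n, f₀.coeff n = (f.coeff n).fst := fun n => by
    rw [hf₀, coeff_map]; rfl
  have hf₀ne : f₀ ≠ 0 := by
    obtain ⟨n, hn⟩ := hf
    intro h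
    exact hn (by rw [← hcoe, h, coeff_zero])
  set c := f₀.leadingCoeff with hcdef
  have hc : c ≠ 0 := leadingCoeff_ne_zero.2 hf₀ne
  set F : Polynomial (TrivSqZeroExt K L) := (f₀ * C c⁻¹).map (inlHom K L) with hF
  have hFm : F.Monic := (monic_mul_leadingCoeff_inv hf₀ne).map _
  have hCuF : C (inl c : TrivSqZeroExt K L) * F = f₀.map (inlHom K L) := by
    have hinl : (inl c : TrivSqZeroExt K L) = inlHom K L c := rfl
    rw [hF, hinl, ← Polynomial.map_C (inlHom K L), ← Polynomial.map_mul]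
    congr 1
    rw [mul_comm f₀ (C c⁻¹), ← mul_assoc, ← C_mul, mul_inv_cancel₀ hc, C_1, one_mul]
  set f₁ : Polynomial (TrivSqZeroExt K L) := f - C (inl c) * F with hf₁def
  have hf₁ : ∀ n, (f₁.coeff n).fst = 0 := fun n => by
    rw [hf₁def, hCuF, coeff_sub, coeff_map]
    rw [fst_sub]
    show (f.coeff n).fst - (inl (f₀.coeff n) : TrivSqZeroExt K L).fst = 0
    rw [fst_inl, hcoe, sub_self]
  have hfg : f * g = C (inl c : TrivSqZeroExt K L) * (F * g) := by
    have : f = C (inl c) * F + f₁ := by rw [hf₁def]; ring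
    rw [this, add_mul, tsze_poly_mul_eq_zero hf₁ hg, add_zero, mul_assoc]
  have hu : IsUnit (inl c : TrivSqZeroExt K L) := tsze_isUnit_iff.2 (by rwa [fst_inl])
  rw [hfg, contentIdeal_C_mul_of_isUnit hu, hcf, Ideal.top_mul]
  apply le_antisymm
  · exact (contentIdeal_mul_le F g).trans Ideal.mul_le_right
  · rw [contentIdeal_le_iff]
    exact fun j => coeff_mem_contentIdeal_monic_mul hFm g j

end main2


section main4
variable {K L : Type*} [Field K] [Field L] [Algebra K L] [Module Kᵐᵒᵖ L] [IsCentralScalar K L]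

theorem tsze_isGaussian : IsGaussianRing (TrivSqZeroExt K L) := by
  intro f g
  by_cases hf : ∀ n, (f.coeff n).fst = 0
  · by_cases hg : ∀ n, (g.coeff n).fst = 0
    · rw [tsze_poly_mul_eq_zero hf hg]
      have h0 : contentIdeal (0 : Polynomial (TrivSqZeroExt K L)) = ⊥ := by
        rw [eq_bot_iff, contentIdeal_le_iff]
        intro n; rw [coeff_zero]; exact Submodule.zero_mem _
      rw [h0, eq_comm, eq_bot_iff, Ideal.mul_le]
      intro r hr s hs
      have hr0 : r.fst = 0 :=
        (contentIdeal_le_iff (I := RingHom.ker (fstHom K K L).toRingHom)).2 (fun n => hf n) hr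
      have hs0 : s.fst = 0 :=
        (contentIdeal_le_iff (I := RingHom.ker (fstHom K K L).toRingHom)).2 (fun n => hg n) hs
      rw [Ideal.mem_bot]
      exact tsze_mul_eq_zero hr0 hs0
    · push_neg at hg
      rw [mul_comm f g, tsze_gauss_case hg hf, mul_comm]
  · push_neg at hf
    by_cases hg : ∀ n, (g.coeff n).fst = 0
    · exact tsze_gauss_case hf hg
    · push_neg at hg
      rw [tsze_contentIdeal_eq_top hf, tsze_contentIdeal_eq_top hg, Ideal.top_mul]
      apply tsze_contentIdeal_eq_top
      have hmap : ∀ {p : Polynomial (TrivSqZeroExt K L)}, (∃ n, (p.coeff n).fst ≠ 0) →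
          p.map (fstHom K K L).toRingHom ≠ 0 := by
        rintro p ⟨n, hn⟩ hzero
        apply hn
        have := congrArg (fun q => Polynomial.coeff q n) hzero
        simpa [coeff_map] using this
      have hne := mul_ne_zero (hmap hf) (hmap hg)
      rw [← Polynomial.map_mul] at hne
      simp only [Ne, Polynomial.ext_iff, coeff_zero, not_forall] at hne
      obtain ⟨n, hn⟩ := hne
      exact ⟨n, by rwa [coeff_map] at hn⟩

end main4

section main3
variable {K L : Type*} [Field K] [Field L] [Algebra K L] [Module Kᵐᵒᵖ L] [IsCentralScalar K L]

theorem tsze_mem_ker_iff {x : TrivSqZeroExt K L} :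
    x ∈ RingHom.ker (fstHom K K L).toRingHom ↔ x.fst = 0 := Iff.rfl

theorem tsze_not_arithmetical (hproper : ∃ x : L, x ∉ Set.range (algebraMap K L)) :
    ¬ IsArithmeticalRing (TrivSqZeroExt K L) := by
  obtain ⟨x, hx⟩ := hproper
  intro h
  set m : Ideal (TrivSqZeroExt K L) := RingHom.ker (fstHom K K L).toRingHom with hm
  have hmmax : m.IsMaximal := RingHom.ker_isMaximal_of_surjective _ (fun a => ⟨inl a, rfl⟩)
  haveI := hmmax.isPrime
  set I : Ideal (TrivSqZeroExt K L) := Ideal.span {inr 1, inr x} with hI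
  have hIfg : I.FG := Submodule.fg_span (Set.toFinite _)
  have hloc := h I hIfg m hmmax
  have hunits : m.primeCompl ≤ IsUnit.submonoid (TrivSqZeroExt K L) := by
    intro y hy
    have : y ∉ m := hy
    exact tsze_isUnit_iff.2 fun h0 => this (tsze_mem_ker_iff.2 h0)
  set e := IsLocalization.atUnits (R := TrivSqZeroExt K L) (S := Localization m.primeCompl)
    m.primeCompl hunits with he
  have halg : algebraMap (TrivSqZeroExt K L) (Localization m.primeCompl)
      = e.toAlgHom.toRingHom := by
    ext r
    simp [e.commutes r]
  have hIP : I.IsPrincipal := by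
    obtain ⟨y, hy⟩ := hloc
    rw [halg] at hy
    refine ⟨⟨e.symm y, ?_⟩⟩
    have h2 : (I.map (e.toRingEquiv : TrivSqZeroExt K L ≃+* _)).map
        (e.toRingEquiv.symm : _ ≃+* TrivSqZeroExt K L) = I := Ideal.map_of_equiv e.toRingEquiv
    have h3 : I.map (e.toRingEquiv : TrivSqZeroExt K L ≃+* _) = Ideal.span {y} := hy
    rw [h3] at h2
    rw [← h2, Ideal.map_span, Set.image_singleton]
    rfl
  obtain ⟨y, hy⟩ := hIP
  have h1 : inr (1 : L) ∈ I := Ideal.subset_span (by simp)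
  have h2 : inr x ∈ I := Ideal.subset_span (by simp)
  rw [hy] at h1 h2
  rcases eq_or_ne y.fst 0 with hy0 | hy0
  · obtain ⟨r, hr⟩ := (Ideal.mem_span_singleton).1 h1
    obtain ⟨s, hs⟩ := (Ideal.mem_span_singleton).1 h2
    have hr' : (1 : L) = r.fst • y.snd := by
      have := congrArg TrivSqZeroExt.snd hr
      rwa [snd_inr, snd_mul, hy0, zero_smul, zero_add, op_smul_eq_smul] at this
    have hs' : x = s.fst • y.snd := by
      have := congrArg TrivSqZeroExt.snd hs
      rwa [snd_inr, snd_mul, hy0, zero_smul, zero_add, op_smul_eq_smul] at this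
    rw [Algebra.smul_def] at hr' hs'
    have hysnd : y.snd = (algebraMap K L r.fst)⁻¹ :=
      eq_inv_of_mul_eq_one_left (by rw [mul_comm]; exact hr'.symm)
    refine hx ⟨s.fst * r.fst⁻¹, ?_⟩
    rw [map_mul, map_inv₀, ← hysnd, ← hs']
  · have : (1 : TrivSqZeroExt K L) ∈ Ideal.span {y} :=
      (Ideal.span_singleton_eq_top.2 (tsze_isUnit_iff.2 hy0)) ▸ Submodule.mem_top
    have hIm : I ≤ m := by
      rw [hI, Ideal.span_le]
      rintro z (rfl | hz)
      · exact tsze_mem_ker_iff.2 (fst_inr K 1)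
      · simp only [Set.mem_singleton_iff] at hz
        subst hz
        exact tsze_mem_ker_iff.2 (fst_inr K x)
    have h1top : (1 : TrivSqZeroExt K L) ∈ m := hIm (hy.symm ▸ this)
    have := tsze_mem_ker_iff.1 h1top
    rw [fst_one] at this
    exact one_ne_zero this

end main3


/-- For a proper field extension `K ⊊ L`, the trivial ring extension
`R := K ⋉ L` is a Gaussian ring which is not arithmetical. -/
theorem gaussian_not_arithmetical_trivSqZeroExt_field_ext (K L : Type*) [Field K] [Field L]
    [Algebra K L] [Module Kᵐᵒᵖ L] [IsCentralScalar K L]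
    (hproper : ∃ x : L, x ∉ Set.range (algebraMap K L)) :
    IsGaussianRing (TrivSqZeroExt K L) ∧ ¬ IsArithmeticalRing (TrivSqZeroExt K L) := by
  exact ⟨tsze_isGaussian, tsze_not_arithmetical hproper⟩
end
end

section
/- Let (A,M) be a local integral domain that is not a valuation ring, and let E be a nonzero A-module with M·E = 0. Set B := A ⋉ E and R := A ⋉ B (the trivial ring extension of A by the A-module B). Then R is a total ring of quotients (every element of R is either a unit or a zero-divisor), and R is not a Gaussian ring. -/
/-- Let `(A,M)` be a local integral domain which is not a valuation ring and
`E` a nonzero `A`-module with `M • E = 0`. With `B := A ⋉ E` and `R := A ⋉ B`, the ring `R`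
is a total ring of quotients which is not a Gaussian ring. -/
theorem totalQuotients_not_gaussian_nested_trivSqZeroExt (A E : Type*) [CommRing A]
    [IsDomain A] [IsLocalRing A] (hnv : ¬ ValuationRing A)
    [AddCommGroup E] [Module A E] [Module Aᵐᵒᵖ E] [IsCentralScalar A E] [Nontrivial E]
    (hME : ∀ m ∈ IsLocalRing.maximalIdeal A, ∀ e : E, m • e = 0) :
    IsTotalRingOfQuotients (TrivSqZeroExt A (TrivSqZeroExt A E)) ∧
      ¬ IsGaussianRing (TrivSqZeroExt A (TrivSqZeroExt A E)) := by

  classical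
  constructor
  · -- R is a total ring of quotients
    intro r
    by_cases h : IsUnit r.fst
    · exact Or.inl (TrivSqZeroExt.isUnit_iff_isUnit_fst.mpr h)
    · right
      obtain ⟨e, he⟩ := exists_ne (0 : E)
      intro hr
      have h0 : r * TrivSqZeroExt.inr (TrivSqZeroExt.inr e) = 0 := by
        have hsnd : r.fst • (TrivSqZeroExt.inr e : TrivSqZeroExt A E) = 0 := by
          rw [← TrivSqZeroExt.inr_smul, hME r.fst ((IsLocalRing.mem_maximalIdeal _).mpr h) e,
            TrivSqZeroExt.inr_zero]
        refine TrivSqZeroExt.ext ?_ ?_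
        · rw [TrivSqZeroExt.fst_mul, TrivSqZeroExt.fst_inr, mul_zero, TrivSqZeroExt.fst_zero]
        · rw [TrivSqZeroExt.snd_mul, TrivSqZeroExt.snd_inr, TrivSqZeroExt.fst_inr,
            MulOpposite.op_zero, zero_smul, add_zero, hsnd, TrivSqZeroExt.snd_zero]
      have := hr.2 (TrivSqZeroExt.inr (TrivSqZeroExt.inr e)) (by rw [mul_comm]; exact h0)
      rw [← TrivSqZeroExt.inr_zero, ← TrivSqZeroExt.inr_zero] at this
      exact he (TrivSqZeroExt.inr_injective (TrivSqZeroExt.inr_injective this))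
  · -- R is not Gaussian
    intro hG
    apply hnv
    rw [ValuationRing.iff_dvd_total]
    constructor
    intro a b
    by_contra hcon
    push_neg at hcon
    obtain ⟨hab, hba⟩ := hcon
    have hanu : ¬ IsUnit a := fun h => hab h.dvd
    have hbnu : ¬ IsUnit b := fun h => hba h.dvd
    have ha0 : a ≠ 0 := fun h => hba (h ▸ dvd_zero b)
    have hb0 : b ≠ 0 := fun h => hab (h ▸ dvd_zero a)
    open TrivSqZeroExt Polynomial in
    -- notation: R := A ⋉ (A ⋉ E)
    set d : TrivSqZeroExt A (TrivSqZeroExt A E) := inr (inl 1) with hd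
    set u : TrivSqZeroExt A (TrivSqZeroExt A E) := inl (a * b) with hu
    set v : TrivSqZeroExt A (TrivSqZeroExt A E) := inr (inl (a + b)) with hv
    set f : Polynomial (TrivSqZeroExt A (TrivSqZeroExt A E)) := C (inl a) * X + C d with hf
    set g : Polynomial (TrivSqZeroExt A (TrivSqZeroExt A E)) := C (inl b) * X + C d with hg
    have hcd : ∀ x : A, (inl x : TrivSqZeroExt A (TrivSqZeroExt A E)) * d = inr (inl x) := by
      intro x
      rw [hd, inl_mul_inr]
      congr 1
      rw [← inl_smul, smul_eq_mul, mul_one]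
    have key : f * g = C u * X ^ 2 + C v * X := by
      have expand : f * g = C ((inl a : TrivSqZeroExt A (TrivSqZeroExt A E)) * inl b) * X ^ 2
          + C ((inl a : TrivSqZeroExt A (TrivSqZeroExt A E)) * d
            + (inl b : TrivSqZeroExt A (TrivSqZeroExt A E)) * d) * X + C (d * d) := by
        simp only [hf, hg, map_mul, map_add]; ring
      rw [expand, inl_mul_inl, hcd, hcd, ← inr_add, ← inl_add, hd, inr_mul_inr, map_zero,
        add_zero, ← hu, ← hv]
    have mem1 : (inl a : TrivSqZeroExt A (TrivSqZeroExt A E)) ∈ _root_.contentIdeal f := by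
      apply Ideal.subset_span
      exact ⟨1, by simp [hf]⟩
    have mem2 : d ∈ _root_.contentIdeal g := by
      apply Ideal.subset_span
      exact ⟨0, by simp [hg]⟩
    have memprod : (inr (inl a) : TrivSqZeroExt A (TrivSqZeroExt A E))
        ∈ _root_.contentIdeal (f * g) := by
      rw [hG f g, ← hcd a]
      exact Ideal.mul_mem_mul mem1 mem2
    have hle : _root_.contentIdeal (f * g) ≤ Ideal.span {u, v} := by
      rw [key, _root_.contentIdeal]
      apply Ideal.span_le.mpr
      rintro _ ⟨n, rfl⟩
      simp only [coeff_add, coeff_C_mul, coeff_X_pow, coeff_X, mul_ite, mul_one, mul_zero]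
      split_ifs with h1 h2 h2
      · omega
      · exact Ideal.add_mem _ (Ideal.subset_span (by simp)) (Ideal.zero_mem _)
      · exact Ideal.add_mem _ (Ideal.zero_mem _) (Ideal.subset_span (by simp))
      · simpa using Ideal.zero_mem (Ideal.span {u, v})
    have hmem := hle memprod
    rw [Ideal.mem_span_pair] at hmem
    obtain ⟨x, y, hxy⟩ := hmem
    have hfst : x.fst * (a * b) = 0 := by
      have := congrArg TrivSqZeroExt.fst hxy
      simpa [hu, hv, fst_mul] using this
    have hx1 : x.fst = 0 := by
      rcases mul_eq_zero.mp hfst with h | h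
      · exact h
      · exact absurd (mul_eq_zero.mp h) (by tauto)
    have hsnd : (a * b) • x.snd + inl (y.fst * (a + b)) = (inl a : TrivSqZeroExt A E) := by
      have := congrArg TrivSqZeroExt.snd hxy
      simp only [hu, hv, snd_mul, snd_add, snd_inl, snd_inr, fst_inl, fst_inr, smul_zero,
        zero_add, add_zero, MulOpposite.op_zero, zero_smul, op_smul_eq_smul] at this
      rw [← this, ← inl_smul, smul_eq_mul]
    have hA : a * b * x.snd.fst + y.fst * (a + b) = a := by
      have := congrArg TrivSqZeroExt.fst hsnd
      simpa [fst_smul, smul_eq_mul, mul_comm] using this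
    -- the arithmetic contradiction in the local domain A
    set p := x.snd.fst
    set y1 := y.fst
    have h2 : a * (1 - b * p - y1) = y1 * b := by linear_combination -hA
    by_cases hy : IsUnit y1
    · obtain ⟨z, hz⟩ := hy.exists_right_inv
      exact hab ⟨z * (1 - b * p - y1), by linear_combination -z * h2 - b * hz⟩
    · have hunit : IsUnit (1 - b * p - y1) := by
        by_contra hnu
        have h1 : (1 : A) = (1 - b * p - y1) + (b * p + y1) := by ring
        have hm : b * p + y1 ∈ IsLocalRing.maximalIdeal A :=
          Ideal.add_mem _ (Ideal.mul_mem_right _ _ ((IsLocalRing.mem_maximalIdeal _).mpr hbnu))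
            ((IsLocalRing.mem_maximalIdeal _).mpr hy)
        have hm2 : (1 - b * p - y1) ∈ IsLocalRing.maximalIdeal A :=
          (IsLocalRing.mem_maximalIdeal _).mpr hnu
        have hone := Ideal.add_mem _ hm2 hm
        rw [← h1] at hone
        exact ((IsLocalRing.mem_maximalIdeal _).mp hone) isUnit_one
      obtain ⟨z, hz⟩ := hunit.exists_right_inv
      exact hba ⟨y1 * z, by linear_combination z * h2 - a * hz⟩
end

section
/- Let (A,M) be a local ring and E a nonzero A-module with M·E = 0 (i.e., E is a vector space over A/M). Then the trivial ring extension R := A ⋉ E is a total ring of quotients: every element of R is either a unit or a zero-divisor. -/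
/-- Let `(A,M)` be a local ring and `E` a nonzero `A`-module with `M • E = 0`.
Then the trivial ring extension `R := A ⋉ E` is a total ring of quotients. -/
theorem totalQuotients_trivSqZeroExt (A E : Type*) [CommRing A] [IsLocalRing A]
    [AddCommGroup E] [Module A E] [Module Aᵐᵒᵖ E] [IsCentralScalar A E] [Nontrivial E]
    (hME : ∀ m ∈ IsLocalRing.maximalIdeal A, ∀ e : E, m • e = 0) :
    IsTotalRingOfQuotients (TrivSqZeroExt A E) := by
  intro r
  by_cases h : IsUnit r.fst
  · left; exact TrivSqZeroExt.isUnit_iff_isUnit_fst.mpr h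
  · right
    intro hnzd
    obtain ⟨e0, he0⟩ := exists_ne (0 : E)
    have hm : r.fst ∈ IsLocalRing.maximalIdeal A := h
    have : TrivSqZeroExt.inr e0 * r = 0 := by
      ext
      · simp
      · simp [hME _ hm]
    have := hnzd.2 _ this
    apply he0
    have := congrArg TrivSqZeroExt.snd this
    simpa using this
end

section
/- Let (A,M) be a local ring and E a nonzero A-module with M·E = 0 (i.e., E is a vector space over A/M). Then the trivial ring extension R := A ⋉ E is an arithmetical ring if and only if A is a field and E is one-dimensional over A, i.e., there exists a nonzero e ∈ E such that every element of E is of the form a • e for some a ∈ A. -/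
section Aux

open TrivSqZeroExt

/-- If every element of a submonoid `M` is a unit, then any ideal whose extension to the
localization at `M` is principal is itself principal. -/
lemma principal_of_localization_principal {R : Type*} [CommRing R] (M : Submonoid R)
    (hunits : ∀ x ∈ M, IsUnit x) (I : Ideal R)
    (h : (I.map (algebraMap R (Localization M))).IsPrincipal) : I.IsPrincipal := by
  set S := Localization M
  let e : R ≃ₐ[R] S := IsLocalization.atUnits R M hunits
  have he : ∀ x : R, e x = algebraMap R S x := fun x => by
    simpa using e.commutes x
  obtain ⟨y, hy⟩ := h.principal
  rw [Ideal.submodule_span_eq] at hy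
  have hsurj : Function.Surjective (algebraMap R S) := by
    intro s
    obtain ⟨x, hx⟩ := e.surjective s
    exact ⟨x, by rw [← he, hx]⟩
  refine ⟨⟨e.symm y, ?_⟩⟩
  rw [Ideal.submodule_span_eq]
  apply le_antisymm
  · intro x hx
    have h1 : algebraMap R S x ∈ I.map (algebraMap R S) := Ideal.mem_map_of_mem _ hx
    rw [hy, Ideal.mem_span_singleton] at h1
    obtain ⟨c, hc⟩ := h1
    rw [Ideal.mem_span_singleton]
    refine ⟨e.symm c, e.injective ?_⟩
    rw [map_mul, e.apply_symm_apply, e.apply_symm_apply, he, hc]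
  · rw [Ideal.span_le, Set.singleton_subset_iff]
    have hyI : y ∈ I.map (algebraMap R S) := by
      rw [hy]; exact Ideal.mem_span_singleton_self y
    obtain ⟨x, hx, hxy⟩ := (Ideal.mem_map_iff_of_surjective _ hsurj).mp hyI
    have hx' : e.symm y = x := by rw [← hxy, ← he, e.symm_apply_apply]
    rwa [hx']

lemma trivSqZeroExt_isLocalRing (A E : Type*) [CommRing A] [IsLocalRing A]
    [AddCommGroup E] [Module A E] [Module Aᵐᵒᵖ E] [IsCentralScalar A E] :
    IsLocalRing (TrivSqZeroExt A E) := by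
  haveI : Nontrivial (TrivSqZeroExt A E) :=
    ⟨0, 1, fun h => by simpa using congrArg TrivSqZeroExt.fst h⟩
  refine IsLocalRing.of_isUnit_or_isUnit_one_sub_self fun x => ?_
  rcases IsLocalRing.isUnit_or_isUnit_one_sub_self x.fst with h | h
  · exact Or.inl (isUnit_iff_isUnit_fst.mpr h)
  · refine Or.inr (isUnit_iff_isUnit_fst.mpr ?_)
    simpa [fst_sub, fst_one] using h

end Aux

open TrivSqZeroExt

/-- Let `(A,M)` be a local ring and `E` a nonzero `A`-module with `M • E = 0`.
Then `R := A ⋉ E` is arithmetical iff `A` is a field and `E` is one-dimensional over `A`. -/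
theorem arithmetical_trivSqZeroExt_local_iff (A E : Type*) [CommRing A] [IsLocalRing A]
    [AddCommGroup E] [Module A E] [Module Aᵐᵒᵖ E] [IsCentralScalar A E] [Nontrivial E]
    (hME : ∀ m ∈ IsLocalRing.maximalIdeal A, ∀ e : E, m • e = 0) :
    IsArithmeticalRing (TrivSqZeroExt A E) ↔
      IsField A ∧ ∃ e : E, e ≠ 0 ∧ ∀ x : E, ∃ a : A, x = a • e := by
  constructor
  · intro h
    haveI : IsLocalRing (TrivSqZeroExt A E) := trivSqZeroExt_isLocalRing A E
    -- every finitely generated ideal is principal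
    have hprin : ∀ I : Ideal (TrivSqZeroExt A E), I.FG → I.IsPrincipal := by
      intro I hfg
      haveI hmax := IsLocalRing.maximalIdeal.isMaximal (TrivSqZeroExt A E)
      refine principal_of_localization_principal _ ?_ I (h I hfg _ hmax)
      intro x hx
      by_contra hux
      exact hx ((IsLocalRing.mem_maximalIdeal x).mpr hux)
    obtain ⟨e₀, he₀⟩ := exists_ne (0 : E)
    have hkill : ∀ c : A, c • e₀ = 0 → c ∈ IsLocalRing.maximalIdeal A := by
      intro c hc
      rw [IsLocalRing.mem_maximalIdeal, mem_nonunits_iff]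
      rintro ⟨u, rfl⟩
      apply he₀
      calc e₀ = ((↑u⁻¹ * ↑u : A)) • e₀ := by simp
        _ = (↑u⁻¹ : A) • ((u : A) • e₀) := by rw [mul_smul]
        _ = 0 := by rw [hc, smul_zero]
    have hfix : ∀ c : A, c • e₀ = e₀ → IsUnit c := by
      intro c hc
      by_contra huc
      have h1 : (1 - c) • e₀ = 0 := by rw [sub_smul, one_smul, hc, sub_self]
      have h2 := hkill _ h1
      have h3 : (1 : A) ∈ IsLocalRing.maximalIdeal A := by
        have := Ideal.add_mem _ ((IsLocalRing.mem_maximalIdeal c).mpr huc) h2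
        rwa [add_sub_cancel] at this
      rw [IsLocalRing.mem_maximalIdeal, mem_nonunits_iff] at h3
      exact h3 isUnit_one
    have hfield : IsField A := by
      rw [IsLocalRing.isField_iff_maximalIdeal_eq, eq_bot_iff]
      intro m hm
      obtain ⟨z, hz⟩ := (hprin (Ideal.span {inl m, inr e₀})
        (Submodule.fg_span (Set.toFinite _))).principal
      rw [Ideal.submodule_span_eq] at hz
      have hzI : z ∈ Ideal.span {(inl m : TrivSqZeroExt A E), inr e₀} := by
        rw [hz]; exact Submodule.mem_span_singleton_self z
      obtain ⟨r, s, hrs⟩ := Ideal.mem_span_pair.mp hzI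
      have hmI : (inl m : TrivSqZeroExt A E) ∈ Ideal.span {z} := by
        rw [← hz]; exact Ideal.subset_span (Set.mem_insert _ _)
      have heI : (inr e₀ : TrivSqZeroExt A E) ∈ Ideal.span {z} := by
        rw [← hz]; exact Ideal.subset_span (Set.mem_insert_of_mem _ rfl)
      obtain ⟨c, hc⟩ := Ideal.mem_span_singleton.mp hmI
      obtain ⟨d, hd⟩ := Ideal.mem_span_singleton.mp heI
      have zfst : z.fst = r.fst * m := by
        rw [← hrs]; simp [fst_mul]
      have zsnd : z.snd = s.fst • e₀ := by
        rw [← hrs]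
        simp [snd_mul, op_smul_eq_smul, hME m hm]
      have hz0 : ∀ y : E, z.fst • y = 0 := fun y => by
        rw [zfst]; exact hME _ (Ideal.mul_mem_left _ _ hm) y
      -- from `inr e₀ = z * d` : e₀ = (d.fst * s.fst) • e₀
      have h3 : (d.fst * s.fst) • e₀ = e₀ := by
        have := congrArg TrivSqZeroExt.snd hd
        simp only [snd_inr, snd_mul, op_smul_eq_smul, hz0, zsnd, zero_add, smul_smul] at this
        exact this.symm
      have hs_unit : IsUnit s.fst := isUnit_of_mul_isUnit_right (hfix _ h3)
      -- from `inl m = z * c` (snd) : (c.fst * s.fst) • e₀ = 0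
      have h4 : (c.fst * s.fst) • e₀ = 0 := by
        have := congrArg TrivSqZeroExt.snd hc
        simp only [snd_inl, snd_mul, op_smul_eq_smul, hz0, zsnd, zero_add, smul_smul] at this
        exact this.symm
      have hcs := hkill _ h4
      obtain ⟨u, hu⟩ := hs_unit
      have hcfst : c.fst ∈ IsLocalRing.maximalIdeal A := by
        have : c.fst = (c.fst * s.fst) * ↑u⁻¹ := by
          rw [← hu, mul_assoc]; simp
        rw [this]
        exact Ideal.mul_mem_right _ _ hcs
      -- from `inl m = z * c` (fst) : m = r.fst * m * c.fst
      have h5 : m = r.fst * m * c.fst := by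
        have := congrArg TrivSqZeroExt.fst hc
        simp only [fst_inl, fst_mul, zfst] at this
        exact this
      have h6 : m * (1 - r.fst * c.fst) = 0 := by
        rw [mul_sub, mul_one]
        nth_rewrite 1 [h5]
        ring
      have h7 : IsUnit (1 - r.fst * c.fst) :=
        IsLocalRing.isUnit_one_sub_self_of_mem_nonunits _
          ((IsLocalRing.mem_maximalIdeal _).mp (Ideal.mul_mem_left _ _ hcfst))
      rw [Ideal.mem_bot]
      obtain ⟨v, hv⟩ := h7
      calc m = m * ↑v * ↑v⁻¹ := by rw [mul_assoc]; simp
        _ = 0 := by rw [hv, h6, zero_mul]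
    refine ⟨hfield, e₀, he₀, fun x => ?_⟩
    -- Step 2: E is one-dimensional
    obtain ⟨z, hz⟩ := (hprin (Ideal.span {inr e₀, inr x})
      (Submodule.fg_span (Set.toFinite _))).principal
    rw [Ideal.submodule_span_eq] at hz
    have heI : (inr e₀ : TrivSqZeroExt A E) ∈ Ideal.span {z} := by
      rw [← hz]; exact Ideal.subset_span (Set.mem_insert _ _)
    have hxI : (inr x : TrivSqZeroExt A E) ∈ Ideal.span {z} := by
      rw [← hz]; exact Ideal.subset_span (Set.mem_insert_of_mem _ rfl)
    have hzI : z ∈ Ideal.span {(inr e₀ : TrivSqZeroExt A E), inr x} := by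
      rw [hz]; exact Submodule.mem_span_singleton_self z
    obtain ⟨r, s, hrs⟩ := Ideal.mem_span_pair.mp hzI
    obtain ⟨c, hc⟩ := Ideal.mem_span_singleton.mp heI
    obtain ⟨d, hd⟩ := Ideal.mem_span_singleton.mp hxI
    have zfst : z.fst = 0 := by
      rw [← hrs]; simp [fst_mul]
    have hc' : e₀ = c.fst • z.snd := by
      have := congrArg TrivSqZeroExt.snd hc
      simpa [snd_mul, op_smul_eq_smul, zfst] using this
    have hd' : x = d.fst • z.snd := by
      have := congrArg TrivSqZeroExt.snd hd
      simpa [snd_mul, op_smul_eq_smul, zfst] using this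
    have hcf : c.fst ≠ 0 := by
      intro h0
      rw [h0, zero_smul] at hc'
      exact he₀ hc'
    obtain ⟨b, hb⟩ := hfield.mul_inv_cancel hcf
    have hzsnd : z.snd = b • e₀ := by
      calc z.snd = (b * c.fst) • z.snd := by rw [mul_comm, hb, one_smul]
        _ = b • (c.fst • z.snd) := by rw [mul_smul]
        _ = b • e₀ := by rw [← hc']
    exact ⟨d.fst * b, by rw [hd', hzsnd, mul_smul]⟩
  · rintro ⟨hfield, e₀, he₀, hspan⟩
    intro I hfg P hP
    have hIprin : I.IsPrincipal := by
      by_cases h1 : ∃ z ∈ I, z.fst ≠ 0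
      · obtain ⟨z, hzI, hzf⟩ := h1
        obtain ⟨b, hb⟩ := hfield.mul_inv_cancel hzf
        have hzu : IsUnit z :=
          isUnit_iff_isUnit_fst.mpr (IsUnit.of_mul_eq_one (a := _) b hb)
        have hI : I = ⊤ := Ideal.eq_top_of_isUnit_mem I hzI hzu
        exact ⟨⟨1, by rw [hI, Ideal.submodule_span_eq, Ideal.span_singleton_one]⟩⟩
      · push_neg at h1
        by_cases h2 : ∃ z ∈ I, z ≠ 0
        · obtain ⟨z, hzI, hz0⟩ := h2
          have hzfst := h1 z hzI
          have hzsnd : z.snd ≠ 0 := by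
            intro hs
            exact hz0 (TrivSqZeroExt.ext (by simp [hzfst]) (by simp [hs]))
          obtain ⟨a, ha⟩ := hspan z.snd
          have ha0 : a ≠ 0 := by
            rintro rfl
            rw [zero_smul] at ha
            exact hzsnd ha
          obtain ⟨b, hb⟩ := hfield.mul_inv_cancel ha0
          have he₀I : (inr e₀ : TrivSqZeroExt A E) ∈ I := by
            have hmem : (inl b : TrivSqZeroExt A E) * z ∈ I := I.mul_mem_left _ hzI
            have : (inl b : TrivSqZeroExt A E) * z = inr e₀ := by
              refine TrivSqZeroExt.ext ?_ ?_
              · simp [fst_mul, hzfst]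
              · simp only [snd_mul, fst_inl, snd_inl, snd_inr, op_smul_eq_smul, hzfst,
                  smul_zero, add_zero, zero_add, smul_zero]
                rw [ha, smul_smul, mul_comm b a, hb, one_smul]
            rwa [this] at hmem
          refine ⟨⟨inr e₀, ?_⟩⟩
          rw [Ideal.submodule_span_eq]
          apply le_antisymm
          · intro w hwI
            have hwfst := h1 w hwI
            obtain ⟨aw, haw⟩ := hspan w.snd
            rw [Ideal.mem_span_singleton]
            refine ⟨inl aw, TrivSqZeroExt.ext ?_ ?_⟩
            · simp [fst_mul, hwfst]
            · simp only [snd_mul, fst_inr, fst_inl, snd_inr, snd_inl, op_smul_eq_smul,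
                zero_smul, zero_add, smul_zero]
              rw [haw]
          · rw [Ideal.span_le, Set.singleton_subset_iff]
            exact he₀I
        · push_neg at h2
          refine ⟨⟨0, ?_⟩⟩
          rw [Submodule.span_zero_singleton]
          exact (Submodule.eq_bot_iff I).mpr h2
    obtain ⟨g, hg⟩ := hIprin.principal
    rw [Ideal.submodule_span_eq] at hg
    exact ⟨⟨algebraMap _ _ g, by
      rw [Ideal.submodule_span_eq, hg, Ideal.map_span, Set.image_singleton]⟩⟩
end

section
/- Let (A,M) be a local integral domain that is not a valuation ring, with maximal ideal M. Then the trivial ring extension R := A ⋉ (A/M), where A/M is viewed as an A-module, is a total ring of quotients (every element of R is either a unit or a zero-divisor) which is not a Gaussian ring. -/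
open Polynomial hiding contentIdeal

lemma aux_coeff_mem {A : Type*} [CommRing A] (f : A[X]) (n : ℕ) :
    f.coeff n ∈ contentIdeal f :=
  Ideal.subset_span ⟨n, rfl⟩

lemma aux_linmul {A : Type*} [CommRing A] (x y z w : A) :
    (C x * X + C y) * (C z * X + C w)
      = C (x*z) * X^2 + C (x*w + y*z) * X + C (y*w) := by
  simp only [C_mul, C_add]; ring

lemma aux_mem_c1 {A : Type*} [CommRing A] (x y : A) :
    x ∈ contentIdeal (C x * X + C y) := by
  have h := aux_coeff_mem (C x * X + C y) 1
  simpa using h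

lemma aux_mem_c0 {A : Type*} [CommRing A] (x y : A) :
    y ∈ contentIdeal (C x * X + C y) := by
  have h := aux_coeff_mem (C x * X + C y) 0
  simpa using h

lemma aux_quad_le {A : Type*} [CommRing A] (p q r : A) (I : Ideal A)
    (hp : p ∈ I) (hq : q ∈ I) (hr : r ∈ I) :
    contentIdeal (C p * X^2 + C q * X + C r) ≤ I := by
  rw [contentIdeal, Ideal.span_le]
  rintro _ ⟨n, rfl⟩
  match n with
  | 0 => simpa using hr
  | 1 => simpa using hq
  | 2 => simpa using hp
  | (n+3) => simp [coeff_X_pow]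

theorem aux_valuation_of_gaussian {A : Type*} [CommRing A] [IsDomain A] [IsLocalRing A]
    (h : IsGaussianRing A) : ValuationRing A := by
  refine { cond' := fun a b => ?_ }
  by_cases ha : a = 0
  · exact ⟨0, Or.inr (by simp [ha])⟩
  by_cases hb : b = 0
  · exact ⟨0, Or.inl (by simp [hb])⟩
  -- Step 1: b*a ∈ (a*a, b*b)
  obtain ⟨r, s, hrs⟩ : ∃ r s, r * (a*a) + s * (b*b) = b * a := by
    refine Ideal.mem_span_pair.mp ?_
    have hmem : b * a ∈ contentIdeal ((C a * X + C b) * (C a * X + C (-b))) := by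
      rw [h (C a * X + C b) (C a * X + C (-b))]
      exact Ideal.mul_mem_mul (aux_mem_c0 a b) (aux_mem_c1 a (-b))
    have hle : contentIdeal ((C a * X + C b) * (C a * X + C (-b)))
        ≤ Ideal.span {a*a, b*b} := by
      rw [aux_linmul]
      refine aux_quad_le _ _ _ _ ?_ ?_ ?_
      · exact Ideal.subset_span (Set.mem_insert _ _)
      · have : a * (-b) + b * a = 0 := by ring
        rw [this]; exact zero_mem _
      · have : b * (-b) = -(b*b) := by ring
        rw [this]
        exact neg_mem (Ideal.subset_span (Set.mem_insert_of_mem _ rfl))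
    exact hle hmem
  -- Step 2: ∃ w, w * b = r * a
  obtain ⟨w, hwb⟩ : ∃ w, w * b = r * a := by
    have hmem : (-(r*a)) * b
        ∈ contentIdeal ((C b * X + C (-(r*a))) * (C b * X + C (r*a - b))) := by
      rw [h (C b * X + C (-(r*a))) (C b * X + C (r*a - b))]
      exact Ideal.mul_mem_mul (aux_mem_c0 b (-(r*a))) (aux_mem_c1 b (r*a - b))
    have hle : contentIdeal ((C b * X + C (-(r*a))) * (C b * X + C (r*a - b)))
        ≤ Ideal.span {b*b} := by
      rw [aux_linmul]
      refine aux_quad_le _ _ _ _ ?_ ?_ ?_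
      · exact Ideal.subset_span rfl
      · have : b * (r*a - b) + -(r*a) * b = -(b*b) := by ring
        rw [this]; exact neg_mem (Ideal.subset_span rfl)
      · have : -(r*a) * (r*a - b) = (r*s) * (b*b) := by linear_combination (-r) * hrs
        rw [this]
        exact Ideal.mul_mem_left _ _ (Ideal.subset_span rfl)
    obtain ⟨w, hw⟩ := Ideal.mem_span_singleton'.mp (hle hmem)
    exact ⟨-w, mul_right_cancel₀ hb (by linear_combination -hw)⟩
  -- Step 3: ∃ v, v * a = s * b
  obtain ⟨v, hva⟩ : ∃ v, v * a = s * b := by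
    have hmem : (-(s*b)) * a
        ∈ contentIdeal ((C a * X + C (-(s*b))) * (C a * X + C (s*b - a))) := by
      rw [h (C a * X + C (-(s*b))) (C a * X + C (s*b - a))]
      exact Ideal.mul_mem_mul (aux_mem_c0 a (-(s*b))) (aux_mem_c1 a (s*b - a))
    have hle : contentIdeal ((C a * X + C (-(s*b))) * (C a * X + C (s*b - a)))
        ≤ Ideal.span {a*a} := by
      rw [aux_linmul]
      refine aux_quad_le _ _ _ _ ?_ ?_ ?_
      · exact Ideal.subset_span rfl
      · have : a * (s*b - a) + -(s*b) * a = -(a*a) := by ring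
        rw [this]; exact neg_mem (Ideal.subset_span rfl)
      · have : -(s*b) * (s*b - a) = (s*r) * (a*a) := by linear_combination (-s) * hrs
        rw [this]
        exact Ideal.mul_mem_left _ _ (Ideal.subset_span rfl)
    obtain ⟨v, hv⟩ := Ideal.mem_span_singleton'.mp (hle hmem)
    exact ⟨-v, mul_right_cancel₀ ha (by linear_combination -hv)⟩
  -- Step 4: w + v = 1
  have hwv : w + v = 1 := by
    have hsum : (w + v) * (a*b) = 1 * (a*b) := by
      linear_combination a * hwb + b * hva + hrs
    exact mul_right_cancel₀ (mul_ne_zero ha hb) hsum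
  rcases IsLocalRing.isUnit_or_isUnit_of_isUnit_add (hwv ▸ isUnit_one) with hu | hu
  · obtain ⟨u, hu⟩ := hu
    refine ⟨(u⁻¹ : Aˣ) * r, Or.inl ?_⟩
    rw [← hu] at hwb
    calc a * ((u⁻¹ : Aˣ) * r) = (u⁻¹ : Aˣ) * (r * a) := by ring
    _ = (u⁻¹ : Aˣ) * ((u : A) * b) := by rw [← hwb]
    _ = b := by rw [← mul_assoc]; simp
  · obtain ⟨u, hu⟩ := hu
    refine ⟨(u⁻¹ : Aˣ) * s, Or.inr ?_⟩
    rw [← hu] at hva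
    calc b * ((u⁻¹ : Aˣ) * s) = (u⁻¹ : Aˣ) * (s * b) := by ring
    _ = (u⁻¹ : Aˣ) * ((u : A) * a) := by rw [← hva]
    _ = a := by rw [← mul_assoc]; simp

lemma aux_contentIdeal_map {R S : Type*} [CommRing R] [CommRing S] (φ : R →+* S)
    (p : R[X]) : contentIdeal (p.map φ) = (contentIdeal p).map φ := by
  unfold contentIdeal
  rw [Ideal.map_span]
  congr 1
  ext x
  constructor
  · rintro ⟨n, rfl⟩
    exact ⟨p.coeff n, ⟨n, rfl⟩, (Polynomial.coeff_map _ _).symm⟩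
  · rintro ⟨_, ⟨n, rfl⟩, rfl⟩
    exact ⟨n, Polynomial.coeff_map _ _⟩

lemma aux_isGaussianRing_of_surjective {R S : Type*} [CommRing R] [CommRing S]
    (φ : R →+* S) (hφ : Function.Surjective φ) (h : IsGaussianRing R) :
    IsGaussianRing S := by
  intro f g
  obtain ⟨f', rfl⟩ := Polynomial.map_surjective φ hφ f
  obtain ⟨g', rfl⟩ := Polynomial.map_surjective φ hφ g
  rw [← Polynomial.map_mul, aux_contentIdeal_map, aux_contentIdeal_map,
    aux_contentIdeal_map, h f' g', Ideal.map_mul]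

/-- Let `(A,M)` be a local integral domain which is not a valuation ring. Then
`R := A ⋉ (A/M)` is a total ring of quotients which is not a Gaussian ring. -/
theorem trivSqZeroExt_residue_not_gaussian (A : Type*) [CommRing A] [IsDomain A]
    [IsLocalRing A] (hnv : ¬ ValuationRing A) :
    IsTotalRingOfQuotients (TrivSqZeroExt A (A ⧸ IsLocalRing.maximalIdeal A)) ∧
      ¬ IsGaussianRing (TrivSqZeroExt A (A ⧸ IsLocalRing.maximalIdeal A)) := by
  set M := IsLocalRing.maximalIdeal A with hM
  constructor
  · intro r
    by_cases hr : r.fst ∈ M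
    · right
      intro hmem
      have key : r.fst • (1 : A ⧸ M) = 0 := by
        have h1 : (1 : A ⧸ M) = Submodule.Quotient.mk (1 : A) := rfl
        rw [h1, ← Submodule.Quotient.mk_smul, smul_eq_mul, mul_one,
          Submodule.Quotient.mk_eq_zero]
        exact hr
      have h0 : (TrivSqZeroExt.inr (1 : A ⧸ M)) * r = 0 := by
        apply TrivSqZeroExt.ext
        · simp
        · simp [TrivSqZeroExt.snd_mul, key]
      have h1 := hmem.2 _ h0
      have : (1 : A ⧸ M) ≠ 0 := one_ne_zero
      exact this (by simpa using congrArg TrivSqZeroExt.snd h1)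
    · left
      rw [TrivSqZeroExt.isUnit_iff_isUnit_fst]
      by_contra hu
      exact hr hu
  · intro hG
    apply hnv
    apply aux_valuation_of_gaussian
    refine aux_isGaussianRing_of_surjective
      ((TrivSqZeroExt.fstHom A A (A ⧸ M)).toRingHom) (fun a => ⟨TrivSqZeroExt.inl a, rfl⟩) hG
end

section
/- Let A ⊆ B be an extension of commutative rings (B is a commutative ring equipped with an injective A-algebra structure, viewed as an A-module) and let R := A ⋉ B be the trivial ring extension of A by B. If R is pseudo-arithmetical, then A is pseudo-arithmetical. -/
section Aux

open TrivSqZeroExt Polynomial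

variable {A B : Type*} [CommRing A] [CommRing B] [Algebra A B] [Module Aᵐᵒᵖ B]
  [IsCentralScalar A B]

noncomputable def jmapAux (A B : Type*) [CommRing A] [CommRing B] [Algebra A B]
    [Module Aᵐᵒᵖ B] [IsCentralScalar A B] : A →ₗ[A] TrivSqZeroExt A B :=
  (TrivSqZeroExt.inrHom A B).comp (Algebra.linearMap A B)

lemma jmapAux_apply (a : A) : jmapAux A B a = inr (algebraMap A B a) := rfl

lemma jmapAux_mul (a : A) (t : TrivSqZeroExt A B) :
    jmapAux A B a * t = jmapAux A B (a * fst t) := by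
  apply TrivSqZeroExt.ext
  · simp [jmapAux_apply]
  · simp [jmapAux_apply, op_smul_eq_smul, Algebra.smul_def, map_mul, mul_comm]

/-- Lift of a polynomial over `A` to `A ⋉ B`, coefficientwise via `jmapAux`. -/
noncomputable def EpolyAux (h : Polynomial A) : Polynomial (TrivSqZeroExt A B) :=
  ⟨.ofCoeff (h.toFinsupp.coeff.mapRange (jmapAux A B) (map_zero _))⟩

lemma EpolyAux_coeff (h : Polynomial A) (n : ℕ) :
    (EpolyAux (B := B) h).coeff n = jmapAux A B (h.coeff n) := by
  simp [EpolyAux, Polynomial.coeff, Finsupp.mapRange_apply]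

/-- The projection `A ⋉ B → A` as a ring hom. -/
noncomputable def piAux (A B : Type*) [CommRing A] [CommRing B] [Algebra A B] [Module Aᵐᵒᵖ B]
    [IsCentralScalar A B] : TrivSqZeroExt A B →+* A :=
  (TrivSqZeroExt.fstHom A A B).toRingHom

lemma piAux_apply (t : TrivSqZeroExt A B) : piAux A B t = fst t := rfl

lemma EpolyAux_mul (f : Polynomial A) (G : Polynomial (TrivSqZeroExt A B)) :
    EpolyAux (B := B) f * G = EpolyAux (B := B) (f * G.map (piAux A B)) := by
  refine Polynomial.ext fun n => ?_
  rw [Polynomial.coeff_mul, EpolyAux_coeff, Polynomial.coeff_mul]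
  simp only [map_sum]
  refine Finset.sum_congr rfl fun p _ => ?_
  rw [EpolyAux_coeff, jmapAux_mul, Polynomial.coeff_map, piAux_apply]

/-- The ideal `jmapAux '' I` of `A ⋉ B`. -/
noncomputable def JIdealAux (I : Ideal A) : Ideal (TrivSqZeroExt A B) :=
  Ideal.span (jmapAux A B '' I)

lemma mem_JIdealAux {I : Ideal A} {z : TrivSqZeroExt A B} :
    z ∈ JIdealAux (B := B) I ↔ ∃ a ∈ I, jmapAux A B a = z := by
  constructor
  · intro hz
    refine Submodule.span_induction ?_ ?_ ?_ ?_ hz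
    · rintro _ ⟨a, ha, rfl⟩; exact ⟨a, ha, rfl⟩
    · exact ⟨0, zero_mem _, map_zero _⟩
    · rintro x y _ _ ⟨a, ha, rfl⟩ ⟨b, hb, rfl⟩
      exact ⟨a + b, add_mem ha hb, map_add _ _ _⟩
    · rintro r x _ ⟨a, ha, rfl⟩
      refine ⟨a * fst r, I.mul_mem_right _ ha, ?_⟩
      rw [smul_eq_mul, mul_comm r, jmapAux_mul]
  · rintro ⟨a, ha, rfl⟩
    exact Ideal.subset_span ⟨a, ha, rfl⟩

lemma contentIdeal_EpolyAux (h : Polynomial A) :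
    _root_.contentIdeal (EpolyAux (B := B) h) = JIdealAux (B := B) (_root_.contentIdeal h) := by
  apply le_antisymm
  · rw [_root_.contentIdeal, Ideal.span_le]
    rintro _ ⟨n, rfl⟩
    rw [EpolyAux_coeff]
    exact mem_JIdealAux.mpr ⟨h.coeff n, Ideal.subset_span ⟨n, rfl⟩, rfl⟩
  · rw [JIdealAux, Ideal.span_le]
    rintro _ ⟨a, ha, rfl⟩
    refine Submodule.span_induction ?_ ?_ ?_ ?_ ha
    · rintro _ ⟨n, rfl⟩
      exact Ideal.subset_span ⟨n, (EpolyAux_coeff h n).symm⟩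
    · rw [map_zero]; exact zero_mem _
    · intro x y _ _ hx hy; rw [map_add]; exact add_mem hx hy
    · intro r x _ hx
      rw [smul_eq_mul, mul_comm, ← TrivSqZeroExt.fst_inl (M := B) r, ← jmapAux_mul]
      exact Ideal.mul_mem_right _ _ hx

lemma map_content_piAux (G : Polynomial (TrivSqZeroExt A B)) :
    (_root_.contentIdeal G).map (piAux A B) = _root_.contentIdeal (G.map (piAux A B)) := by
  rw [_root_.contentIdeal, Ideal.map_span, _root_.contentIdeal]
  congr 1
  rw [← Set.range_comp]
  refine congrArg _ (funext fun n => ?_)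
  simp [Polynomial.coeff_map]

lemma JIdealAux_mul (I : Ideal A) (G : Polynomial (TrivSqZeroExt A B)) :
    JIdealAux (B := B) I * _root_.contentIdeal G
      = JIdealAux (B := B) (I * _root_.contentIdeal (G.map (piAux A B))) := by
  have hsurj : Function.Surjective (piAux A B) := fun a => ⟨inl a, rfl⟩
  apply le_antisymm
  · rw [Ideal.mul_le]
    intro r hr s hs
    obtain ⟨a, ha, rfl⟩ := mem_JIdealAux.mp hr
    rw [jmapAux_mul]
    refine mem_JIdealAux.mpr ⟨a * fst s, Ideal.mul_mem_mul ha ?_, rfl⟩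
    rw [← map_content_piAux]
    exact Ideal.mem_map_of_mem _ hs
  · rw [JIdealAux, Ideal.span_le]
    rintro _ ⟨c, hc, rfl⟩
    refine Submodule.mul_induction_on hc ?_ ?_
    · intro a ha b hb
      rw [← map_content_piAux] at hb
      obtain ⟨y, hy, rfl⟩ := Ideal.mem_map_iff_of_surjective _ hsurj |>.mp hb
      rw [piAux_apply, ← jmapAux_mul]
      exact Ideal.mul_mem_mul (mem_JIdealAux.mpr ⟨a, ha, rfl⟩) hy
    · intro x y hx hy
      rw [map_add]; exact add_mem hx hy

lemma isGaussian_EpolyAux {f : Polynomial A} (hf : IsGaussianPoly f) :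
    IsGaussianPoly (EpolyAux (B := B) f) := by
  intro G
  rw [EpolyAux_mul, contentIdeal_EpolyAux, hf, ← JIdealAux_mul, contentIdeal_EpolyAux]

end Aux


set_option maxHeartbeats 1600000 in
set_option synthInstance.maxHeartbeats 400000 in
/-- For an extension of commutative rings `A ⊆ B`, if the trivial ring
extension `R := A ⋉ B` is pseudo-arithmetical, then so is `A`. -/
theorem pseudoArithmetical_of_trivSqZeroExt (A B : Type*) [CommRing A] [CommRing B]
    [Algebra A B] [Module Aᵐᵒᵖ B] [IsCentralScalar A B]
    (hinj : Function.Injective (algebraMap A B))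
    (h : IsPseudoArithmetical (TrivSqZeroExt A B)) : IsPseudoArithmetical A := by
  intro f hf P hP
  haveI := hP.isPrime
  set π : TrivSqZeroExt A B →+* A := piAux A B with hπ
  have hπsurj : Function.Surjective π := fun a => ⟨TrivSqZeroExt.inl a, rfl⟩
  set Q : Ideal (TrivSqZeroExt A B) := P.comap π with hQ
  haveI hQmax : Q.IsMaximal := Ideal.comap_isMaximal_of_surjective π hπsurj
  haveI := hQmax.isPrime
  set θ := algebraMap (TrivSqZeroExt A B) (Localization Q.primeCompl) with hθdef
  set algP := algebraMap A (Localization P.primeCompl) with halgPdef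
  have hg : ∀ s : Q.primeCompl, IsUnit ((algP.comp π) s.1) := fun s =>
    IsLocalization.map_units (Localization P.primeCompl) (⟨π s.1, s.2⟩ : P.primeCompl)
  set ψ : (Localization Q.primeCompl) →+* (Localization P.primeCompl) := IsLocalization.lift hg with hψdef
  have hψθ : ∀ r, ψ (θ r) = algP (π r) := fun r => IsLocalization.lift_eq hg r
  have hρu : ∀ s : P.primeCompl,
      IsUnit ((θ.comp (algebraMap A (TrivSqZeroExt A B))) s.1) := by
    intro s
    have h2 : algebraMap A (TrivSqZeroExt A B) s.1 = TrivSqZeroExt.inl s.1 :=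
      congrFun (TrivSqZeroExt.algebraMap_eq_inl A B) s.1
    have hs : TrivSqZeroExt.inl s.1 ∈ Q.primeCompl := s.2
    have := IsLocalization.map_units (Localization Q.primeCompl) (⟨TrivSqZeroExt.inl s.1, hs⟩ : Q.primeCompl)
    simpa [h2] using this
  set ρ : (Localization P.primeCompl) →+* (Localization Q.primeCompl) := IsLocalization.lift hρu with hρdef
  have hρ : ∀ a : A, ρ (algP a) = θ (TrivSqZeroExt.inl a) := by
    intro a
    have h2 : algebraMap A (TrivSqZeroExt A B) a = TrivSqZeroExt.inl a :=
      congrFun (TrivSqZeroExt.algebraMap_eq_inl A B) a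
    have h3 := IsLocalization.lift_eq (S := Localization P.primeCompl) hρu a
    rw [hρdef, halgPdef, h3, RingHom.comp_apply, h2]
  set e : (Localization Q.primeCompl) := θ (TrivSqZeroExt.inr 1) with hedef
  have habs : ∀ x : TrivSqZeroExt A B, θ x * e = θ (TrivSqZeroExt.inl (π x)) * e := by
    intro x
    rw [hedef, ← map_mul, ← map_mul]
    congr 1
    apply TrivSqZeroExt.ext
    · simp [hπ, piAux_apply]
    · simp [hπ, piAux_apply]
  have hgen : ∀ a : A, θ (jmapAux A B a) = ρ (algP a) * e := by
    intro a
    rw [hρ, hedef, ← map_mul]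
    congr 1
    rw [jmapAux_apply, TrivSqZeroExt.inl_mul_inr, Algebra.algebraMap_eq_smul_one]
  have hCORE : ∀ l : (Localization Q.primeCompl), l * e = ρ (ψ l) * e := by
    intro l
    obtain ⟨⟨r, s⟩, hmk⟩ := IsLocalization.mk'_surjective Q.primeCompl l
    have hu1 : IsUnit (θ s.1) := IsLocalization.map_units (Localization Q.primeCompl) s
    have hs2 : TrivSqZeroExt.inl (π s.1) ∈ Q.primeCompl := s.2
    have hu2 : IsUnit (θ (TrivSqZeroExt.inl (π s.1))) := IsLocalization.map_units (Localization Q.primeCompl) (⟨_, hs2⟩ : Q.primeCompl)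
    have hls : l * θ s.1 = θ r := by rw [← hmk]; exact IsLocalization.mk'_spec (Localization Q.primeCompl) r s
    have hψl : ρ (ψ l) * θ (TrivSqZeroExt.inl (π s.1)) = θ (TrivSqZeroExt.inl (π r)) := by
      have h1 : θ (TrivSqZeroExt.inl (π s.1)) = ρ (ψ (θ s.1)) := by rw [hψθ, hρ]
      rw [h1, ← map_mul ρ, ← map_mul ψ, hls, hψθ, hρ]
    refine (hu1.mul hu2).mul_right_cancel ?_
    calc (l * e) * (θ s.1 * θ (TrivSqZeroExt.inl (π s.1)))
        = ((l * θ s.1) * e) * θ (TrivSqZeroExt.inl (π s.1)) := by ring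
      _ = (θ r * e) * θ (TrivSqZeroExt.inl (π s.1)) := by rw [hls]
      _ = (θ (TrivSqZeroExt.inl (π r)) * e) * θ (TrivSqZeroExt.inl (π s.1)) := by rw [habs r]
      _ = θ (TrivSqZeroExt.inl (π r)) * (θ (TrivSqZeroExt.inl (π s.1)) * e) := by ring
      _ = θ (TrivSqZeroExt.inl (π r)) * (θ s.1 * e) := by rw [← habs s.1]
      _ = (ρ (ψ l) * θ (TrivSqZeroExt.inl (π s.1))) * (θ s.1 * e) := by rw [hψl]
      _ = (ρ (ψ l) * e) * (θ s.1 * θ (TrivSqZeroExt.inl (π s.1))) := by ring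
  have hINJ : ∀ y : (Localization P.primeCompl), ρ y * e = 0 → y = 0 := by
    intro y hy
    obtain ⟨⟨a, s⟩, rfl⟩ := IsLocalization.mk'_surjective P.primeCompl y
    have h1 : ρ (algP a) * e = 0 := by
      have h2 : ρ (algP a) * e = (ρ (IsLocalization.mk' (Localization P.primeCompl) a s) * e) * ρ (algP s.1) := by
        rw [halgPdef, ← IsLocalization.mk'_spec (Localization P.primeCompl) a s, map_mul ρ]; ring
      rw [h2, hy, zero_mul]
    rw [hρ, hedef, ← map_mul, TrivSqZeroExt.inl_mul_inr] at h1
    obtain ⟨m, hm⟩ := (IsLocalization.map_eq_zero_iff Q.primeCompl (Localization Q.primeCompl) _).mp h1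
    have h4 : TrivSqZeroExt.snd (m.1 * TrivSqZeroExt.inr (a • (1:B))) = (0 : B) := by
      rw [hm]; rfl
    have h5 : a • (TrivSqZeroExt.fst m.1) • (1:B) = 0 := by
      simpa [TrivSqZeroExt.snd_mul] using h4
    have h6 : a * TrivSqZeroExt.fst m.1 = 0 := by
      apply hinj
      rw [map_zero, Algebra.algebraMap_eq_smul_one, mul_smul]
      exact h5
    exact (IsLocalization.mk'_eq_zero_iff a s).mpr
      ⟨⟨TrivSqZeroExt.fst m.1, m.2⟩, by rw [mul_comm]; exact h6⟩
  have hFG : IsGaussianPoly (EpolyAux (B := B) f) := isGaussian_EpolyAux hf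
  have hprin := h (EpolyAux (B := B) f) hFG Q hQmax
  rw [contentIdeal_EpolyAux] at hprin
  obtain ⟨w, hw⟩ := hprin.principal
  have claimA : ∀ v ∈ (JIdealAux (B := B) (contentIdeal f)).map θ,
      ∃ y ∈ (contentIdeal f).map algP, v = ρ y * e := by
    intro v hv
    have hv' : v ∈ Ideal.span
        (θ '' (JIdealAux (B := B) (contentIdeal f) : Set (TrivSqZeroExt A B))) := hv
    refine Submodule.span_induction ?_ ?_ ?_ ?_ hv'
    · rintro _ ⟨z, hz, rfl⟩
      obtain ⟨a, ha, rfl⟩ := mem_JIdealAux.mp hz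
      exact ⟨algP a, Ideal.mem_map_of_mem _ ha, hgen a⟩
    · exact ⟨0, zero_mem _, by rw [map_zero ρ, zero_mul]⟩
    · rintro x y _ _ ⟨y₁, hy₁, rfl⟩ ⟨y₂, hy₂, rfl⟩
      exact ⟨y₁ + y₂, add_mem hy₁ hy₂, by rw [map_add ρ, add_mul]⟩
    · rintro l x _ ⟨y, hy, rfl⟩
      refine ⟨ψ l * y, Ideal.mul_mem_left _ _ hy, ?_⟩
      rw [smul_eq_mul, map_mul ρ]
      calc l * (ρ y * e) = ρ y * (l * e) := by ring
        _ = ρ y * (ρ (ψ l) * e) := by rw [hCORE l]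
        _ = ρ (ψ l) * ρ y * e := by ring
  have hwJ : w ∈ (JIdealAux (B := B) (contentIdeal f)).map θ := by
    rw [hw]; exact Ideal.subset_span rfl
  obtain ⟨x, hxI, hwx⟩ := claimA w hwJ
  refine ⟨⟨x, le_antisymm ?_ ?_⟩⟩
  · rw [Ideal.map_le_iff_le_comap]
    intro a ha
    have hmem : θ (jmapAux A B a) ∈ (JIdealAux (B := B) (contentIdeal f)).map θ :=
      Ideal.mem_map_of_mem _ (mem_JIdealAux.mpr ⟨a, ha, rfl⟩)
    rw [hw] at hmem
    obtain ⟨l, hl⟩ := Ideal.mem_span_singleton'.mp hmem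
    have h7 : ρ (algP a) * e = ρ (ψ l * x) * e := by
      rw [← hgen, ← hl, hwx, map_mul ρ]
      calc l * (ρ x * e) = ρ x * (l * e) := by ring
        _ = ρ x * (ρ (ψ l) * e) := by rw [hCORE l]
        _ = ρ (ψ l) * ρ x * e := by ring
    have h8 : algP a = ψ l * x := by
      have h9 : ρ (algP a - (ψ l * x)) * e = 0 := by
        rw [map_sub ρ, sub_mul, h7, sub_self]
      exact sub_eq_zero.mp (hINJ _ h9)
    rw [Ideal.mem_comap]
    exact Ideal.mem_span_singleton'.mpr ⟨ψ l, h8.symm⟩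
  · exact (Submodule.span_singleton_le_iff_mem x _).mpr hxI
end
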